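/- arXiv:1312.1149 — 6 statements merged into one kernel-verified Lean document; each statement's English description precedes it below -/
import Mathlib

section
/- Let J_{2n} be the 2n×2n real symmetric tridiagonal matrix with diagonal entries (α_n, α_{n-1}, …, α_1, α_1, …, α_{n-1}, α_n) and off-diagonal entries (√w_{n-1}, √w_{n-2}, …, √w_1, √w_0, √w_1, …, √w_{n-2}, √w_{n-1}), where α_i ∈ ℝ and w_i > 0. Then the characteristic polynomial factors as det(λI − J_{2n}) = {(λ − α_1 − √w_0)·det(E_2) − w_1·det(E_3)} · {(λ − α_1 + √w_0)·det(E_2) − w_1·det(E_3)}, where E_k is the (n−k+1)×(n−k+1) tridiagonal matrix with diagonal (λ−α_n, λ−α_{n-1}, …, λ−α_k) and off-diagonal entries (−√w_{n-1}, …, −√w_k). -/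
/-- The `2n × 2n` mirror-symmetric Jacobi matrix with diagonal
`(α_n, …, α_1, α_1, …, α_n)` and off-diagonal couplings
`(√w_{n-1}, …, √w_1, √w_0, √w_1, …, √w_{n-1})` (0-based indices). -/
noncomputable def Jmat (α w : ℕ → ℝ) (n : ℕ) : Matrix (Fin (2*n)) (Fin (2*n)) ℝ :=
  Matrix.of fun i j =>
    if i.1 = j.1 then (if i.1 ≤ n - 1 then α (n - i.1) else α (i.1 - n + 1))
    else if i.1 + 1 = j.1 ∨ j.1 + 1 = i.1 then
      Real.sqrt (w (((n : ℤ) - 1 - (min i.1 j.1 : ℤ)).natAbs))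
    else 0

/-- The `(n-k+1) × (n-k+1)` tridiagonal matrix `E_k` with diagonal
`(λ-α_n, λ-α_{n-1}, …, λ-α_k)` and off-diagonal entries `(-√w_{n-1}, …, -√w_k)`. -/
noncomputable def Emat (lam : ℝ) (α w : ℕ → ℝ) (n k : ℕ) : Matrix (Fin (n + 1 - k)) (Fin (n + 1 - k)) ℝ :=
  Matrix.of fun i j =>
    if i.1 = j.1 then lam - α (n - i.1)
    else if i.1 + 1 = j.1 ∨ j.1 + 1 = i.1 then -Real.sqrt (w (n - 1 - min i.1 j.1))
    else 0


open Matrix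

noncomputable def Ablk (lam : ℝ) (α w : ℕ → ℝ) (n : ℕ) : Matrix (Fin n) (Fin n) ℝ :=
  Matrix.of fun i j =>
    if i.1 = j.1 then lam - α (n - i.1)
    else if i.1 + 1 = j.1 ∨ j.1 + 1 = i.1 then -Real.sqrt (w (n - 1 - min i.1 j.1))
    else 0

noncomputable def Cblk (w : ℕ → ℝ) (n : ℕ) : Matrix (Fin n) (Fin n) ℝ :=
  Matrix.of fun i j => if i.1 = n - 1 ∧ j.1 = n - 1 then -Real.sqrt (w 0) else 0

lemma det_blocks_symm {n : ℕ} (A C : Matrix (Fin n) (Fin n) ℝ) :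
    (fromBlocks A C C A).det = (A - C).det * (A + C).det := by
  have h : fromBlocks (1 : Matrix (Fin n) (Fin n) ℝ) 0 1 1 * fromBlocks A C C A *
      fromBlocks 1 0 (-1) 1 = fromBlocks (A - C) C 0 (A + C) := by
    rw [Matrix.fromBlocks_multiply, Matrix.fromBlocks_multiply]
    simp only [Matrix.one_mul, Matrix.zero_mul, Matrix.mul_one, Matrix.mul_zero,
      Matrix.mul_neg, add_zero, zero_add, ← sub_eq_add_neg]
    congr 1 <;> first | abel | (congr 1 <;> first | abel | (congr 1 <;> abel))
  have hd := congrArg Matrix.det h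
  rw [Matrix.det_mul, Matrix.det_mul, Matrix.det_fromBlocks_zero₁₂,
    Matrix.det_fromBlocks_zero₁₂, Matrix.det_fromBlocks_zero₂₁] at hd
  simpa using hd


lemma tri_det (m : ℕ) (T : Matrix (Fin (m+2)) (Fin (m+2)) ℝ)
    (hrow : ∀ j : Fin m, T (Fin.last (m+1)) j.castSucc.castSucc = 0)
    (hcol : ∀ i : Fin m, T i.castSucc.castSucc (Fin.last (m+1)) = 0) :
    T.det = T (Fin.last (m+1)) (Fin.last (m+1)) *
        (T.submatrix Fin.castSucc Fin.castSucc).det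
      - T (Fin.last (m+1)) (Fin.last m).castSucc *
        T (Fin.last m).castSucc (Fin.last (m+1)) *
        (T.submatrix (Fin.castSucc ∘ Fin.castSucc) (Fin.castSucc ∘ Fin.castSucc)).det := by
  have hminor : (T.submatrix (Fin.last (m+1)).succAbove ((Fin.last m).castSucc).succAbove).det
      = T (Fin.last m).castSucc (Fin.last (m+1)) *
        (T.submatrix (Fin.castSucc ∘ Fin.castSucc) (Fin.castSucc ∘ Fin.castSucc)).det := by
    rw [Matrix.det_succ_column _ (Fin.last m), Fin.sum_univ_castSucc]
    have h0 : ∀ i : Fin m,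
        (T.submatrix (Fin.last (m+1)).succAbove ((Fin.last m).castSucc).succAbove)
          i.castSucc (Fin.last m) = 0 := by
      intro i
      have : ((Fin.last m).castSucc).succAbove (Fin.last m) = Fin.last (m+1) := by
        rw [Fin.succAbove_of_le_castSucc]
        · rfl
        · simp [Fin.le_castSucc_iff, Fin.lt_def]
      rw [Matrix.submatrix_apply, this, Fin.succAbove_last]
      exact hcol i
    rw [Finset.sum_eq_zero (fun i _ => by rw [h0 i]; ring)]
    have hll : ((Fin.last m).castSucc).succAbove (Fin.last m) = Fin.last (m+1) := by
      rw [Fin.succAbove_of_le_castSucc]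
      · rfl
      · simp [Fin.le_castSucc_iff, Fin.lt_def]
    rw [zero_add, Matrix.submatrix_apply, Matrix.submatrix_submatrix, Fin.succAbove_last, hll]
    have hcols : ((Fin.last m).castSucc).succAbove ∘ Fin.castSucc
        = Fin.castSucc ∘ Fin.castSucc := by
      funext j
      simp only [Function.comp_apply]
      exact Fin.succAbove_castSucc_of_lt _ _ (Fin.castSucc_lt_last j)
    rw [Fin.succAbove_last, hcols]
    have : (-1 : ℝ) ^ ((Fin.last m : ℕ) + (Fin.last m : ℕ)) = 1 :=
      Even.neg_one_pow ⟨m, rfl⟩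
    rw [this, one_mul]
  rw [Matrix.det_succ_row T (Fin.last (m+1)), Fin.sum_univ_castSucc, Fin.sum_univ_castSucc]
  rw [Finset.sum_eq_zero (fun j (_ : j ∈ Finset.univ) => by rw [hrow j]; ring)]
  rw [zero_add, hminor, Fin.succAbove_last]
  simp only [Fin.coe_castSucc, Fin.val_last]
  rw [show (-1:ℝ)^(m+1+m) = -1 from Odd.neg_one_pow ⟨m, by ring⟩,
    show (-1:ℝ)^(m+1+(m+1)) = 1 from Even.neg_one_pow ⟨m+1, rfl⟩]
  ring

lemma jsub (lam : ℝ) (α w : ℕ → ℝ) (n : ℕ) (hn : 1 ≤ n) :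
    (lam • (1 : Matrix (Fin (2*n)) (Fin (2*n)) ℝ) - Jmat α w n).submatrix
      ((Equiv.sumCongr (Equiv.refl (Fin n)) Fin.revPerm).trans
        (finSumFinEquiv.trans (finCongr (two_mul n).symm)))
      ((Equiv.sumCongr (Equiv.refl (Fin n)) Fin.revPerm).trans
        (finSumFinEquiv.trans (finCongr (two_mul n).symm)))
    = fromBlocks (Ablk lam α w n) (Cblk w n) (Cblk w n) (Ablk lam α w n) := by
  set e := (Equiv.sumCongr (Equiv.refl (Fin n)) Fin.revPerm).trans
        (finSumFinEquiv.trans (finCongr (two_mul n).symm)) with he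
  have he1 : ∀ i : Fin n, (e (Sum.inl i)).1 = i.1 := by
    intro i; simp [he, Fin.rev]
  have he2 : ∀ i : Fin n, (e (Sum.inr i)).1 = 2*n - 1 - i.1 := by
    intro i
    have := i.2
    simp [he, Fin.rev]
    omega
  have hα : ∀ a b : ℕ, a = b → lam * 1 - α a = lam - α b := by rintro _ _ rfl; ring
  have hw' : ∀ X Y : ℕ, X = Y → lam * 0 - Real.sqrt (w X) = -Real.sqrt (w Y) := by
    rintro _ _ rfl; ring
  ext i j
  rcases i with i | i <;> rcases j with j | j
  · have hi := i.2; have hj := j.2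
    simp only [Matrix.submatrix_apply, Matrix.fromBlocks_apply₁₁, Matrix.sub_apply,
      Matrix.smul_apply, smul_eq_mul, Matrix.one_apply, Jmat, Ablk, Matrix.of_apply,
      Fin.ext_iff, he1, he2]
    split_ifs with h1 h2 h3
    · ring1
    · exfalso; omega
    · exact hw' _ _ (by omega)
    · ring1
  · -- inl.inr
    have hi := i.2; have hj := j.2
    simp only [Matrix.submatrix_apply, Matrix.fromBlocks_apply₁₂, Matrix.sub_apply,
      Matrix.smul_apply, smul_eq_mul, Matrix.one_apply, Jmat, Cblk, Matrix.of_apply,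
      Fin.ext_iff, he1, he2]
    split_ifs <;>
      first
      | ring1
      | (exfalso; omega)
      | (exact hw' _ _ (by omega))
  · -- inr.inl
    have hi := i.2; have hj := j.2
    simp only [Matrix.submatrix_apply, Matrix.fromBlocks_apply₂₁, Matrix.sub_apply,
      Matrix.smul_apply, smul_eq_mul, Matrix.one_apply, Jmat, Cblk, Matrix.of_apply,
      Fin.ext_iff, he1, he2]
    split_ifs <;>
      first
      | ring1
      | (exfalso; omega)
      | (exact hw' _ _ (by omega))
  · -- inr.inr
    have hi := i.2; have hj := j.2
    simp only [Matrix.submatrix_apply, Matrix.fromBlocks_apply₂₂, Matrix.sub_apply,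
      Matrix.smul_apply, smul_eq_mul, Matrix.one_apply, Jmat, Ablk, Matrix.of_apply,
      Fin.ext_iff, he1, he2]
    split_ifs <;>
      first
      | ring1
      | (exfalso; omega)
      | (exact hα _ _ (by omega))
      | (exact hw' _ _ (by omega))

lemma det_tri_gen (m : ℕ) (lam c : ℝ) (α w : ℕ → ℝ) (hw1 : 0 ≤ w 1) :
    (Ablk lam α w (m+2) + c • Cblk w (m+2)).det
      = (lam - α 1 - c * Real.sqrt (w 0)) * (Emat lam α w (m+2) 2).det
        - w 1 * (Emat lam α w (m+2) 3).det := by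
  set T := Ablk lam α w (m+2) + c • Cblk w (m+2) with hT
  have happ : ∀ i j : Fin (m+2), T i j
      = (if i.1 = j.1 then lam - α (m+2 - i.1)
          else if i.1 + 1 = j.1 ∨ j.1 + 1 = i.1 then -Real.sqrt (w (m+2 - 1 - min i.1 j.1))
          else 0)
        + c * (if i.1 = m+2-1 ∧ j.1 = m+2-1 then -Real.sqrt (w 0) else 0) := by
    intro i j
    simp [hT, Ablk, Cblk, Matrix.add_apply, Matrix.smul_apply, smul_eq_mul]
  have hrow : ∀ j : Fin m, T (Fin.last (m+1)) j.castSucc.castSucc = 0 := by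
    intro j
    have hj := j.2
    rw [happ]
    simp only [Fin.val_last, Fin.coe_castSucc]
    split_ifs <;> first | ring1 | (exfalso; omega)
  have hcol : ∀ i : Fin m, T i.castSucc.castSucc (Fin.last (m+1)) = 0 := by
    intro i
    have hi := i.2
    rw [happ]
    simp only [Fin.val_last, Fin.coe_castSucc]
    split_ifs <;> first | ring1 | (exfalso; omega)
  have hll : T (Fin.last (m+1)) (Fin.last (m+1)) = lam - α 1 - c * Real.sqrt (w 0) := by
    rw [happ]
    simp only [Fin.val_last]
    split_ifs <;>
      first
        | (exfalso; omega)
        | (rw [show m+2 - (m+1) = 1 by omega]; ring)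
  have hlc : T (Fin.last (m+1)) (Fin.last m).castSucc = -Real.sqrt (w 1) := by
    rw [happ]
    simp only [Fin.val_last, Fin.coe_castSucc, or_true, true_or, if_true]
    split_ifs <;>
      first
        | (exfalso; omega)
        | (rw [show m+2-1 - min (m+1) m = 1 by omega]; ring)
  have hcl : T (Fin.last m).castSucc (Fin.last (m+1)) = -Real.sqrt (w 1) := by
    rw [happ]
    simp only [Fin.val_last, Fin.coe_castSucc, or_true, true_or, if_true]
    split_ifs <;>
      first
        | (exfalso; omega)
        | (rw [show m+2-1 - min m (m+1) = 1 by omega]; ring)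
  have hsub2 : T.submatrix Fin.castSucc Fin.castSucc = Emat lam α w (m+2) 2 := by
    ext i j
    have hi := i.2
    have hj := j.2
    rw [Matrix.submatrix_apply, happ]
    simp only [Emat, Matrix.of_apply, Fin.coe_castSucc]
    split_ifs <;> first | ring1 | (exfalso; omega)
  have hsub3 : T.submatrix (Fin.castSucc ∘ Fin.castSucc) (Fin.castSucc ∘ Fin.castSucc)
      = Emat lam α w (m+2) 3 := by
    ext i j
    have hi := i.2
    have hj := j.2
    rw [Matrix.submatrix_apply, happ]
    simp only [Emat, Matrix.of_apply, Function.comp_apply, Fin.coe_castSucc]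
    split_ifs <;> first | ring1 | (exfalso; omega)
  rw [tri_det m T hrow hcol, hll, hlc, hcl, hsub2, hsub3, neg_mul_neg,
    Real.mul_self_sqrt hw1]

/-- Determinantal factorization of the characteristic polynomial of the
mirror-symmetric Jacobi matrix `J_{2n}`. -/
theorem det_charpoly_factorization
    (n : ℕ) (hn : 2 ≤ n) (α w : ℕ → ℝ) (hw : ∀ i, i < n → 0 < w i) (lam : ℝ) :
    (lam • (1 : Matrix (Fin (2*n)) (Fin (2*n)) ℝ) - Jmat α w n).det =
      ((lam - α 1 - Real.sqrt (w 0)) * (Emat lam α w n 2).det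
          - w 1 * (Emat lam α w n 3).det) *
      ((lam - α 1 + Real.sqrt (w 0)) * (Emat lam α w n 2).det
          - w 1 * (Emat lam α w n 3).det) := by
  obtain ⟨m, rfl⟩ : ∃ m, n = m + 2 := ⟨n - 2, by omega⟩
  set e := (Equiv.sumCongr (Equiv.refl (Fin (m+2))) Fin.revPerm).trans
      (finSumFinEquiv.trans (finCongr (two_mul (m+2)).symm)) with he
  have hs := jsub lam α w (m+2) (by omega)
  rw [← he] at hs
  have hdet : (lam • (1 : Matrix (Fin (2*(m+2))) (Fin (2*(m+2))) ℝ) - Jmat α w (m+2)).det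
      = ((lam • (1 : Matrix (Fin (2*(m+2))) (Fin (2*(m+2))) ℝ) - Jmat α w (m+2)).submatrix e e).det :=
    (Matrix.det_submatrix_equiv_self e _).symm
  rw [hdet, hs, det_blocks_symm]
  have hm : Ablk lam α w (m+2) - Cblk w (m+2)
      = Ablk lam α w (m+2) + (-1 : ℝ) • Cblk w (m+2) := by
    rw [neg_one_smul]; exact sub_eq_add_neg _ _
  have hp : Ablk lam α w (m+2) + Cblk w (m+2)
      = Ablk lam α w (m+2) + (1 : ℝ) • Cblk w (m+2) := by rw [one_smul]
  have hw1 : (0:ℝ) ≤ w 1 := (hw 1 (by omega)).le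
  rw [hm, hp, det_tri_gen m lam (-1) α w hw1, det_tri_gen m lam 1 α w hw1]
  ring
end

section
/- With the notation of the symmetric Jacobi matrix J_{2n}: if λ satisfies (λ − α_1 − √w_0)·det(E_2) − w_1·det(E_3) = 0, then the vector v with components v_j = det(E_{n-j+2})/√(w_{n-j+1}⋯w_{n-1}) for j = 1,…,n (interpreting det(E_{n+1}) = 1 and the empty product as 1) and v_{2n+1-j} = v_j for j = 1,…,n, is an eigenvector of J_{2n} with eigenvalue λ. -/
/-- The candidate eigenvector of `J_{2n}`: components
`v_j = det(E_{n-j+2}) / √(w_{n-j+1} ⋯ w_{n-1})` for `j = 1, …, n` (here 0-based),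
reflected with sign `s` on the second half. -/
noncomputable def vsym (lam : ℝ) (α w : ℕ → ℝ) (n : ℕ) (s : ℝ) : Fin (2*n) → ℝ := fun j =>
  if j.1 < n then
    (Emat lam α w n (n - j.1 + 1)).det / Real.sqrt (∏ m ∈ Finset.Ico (n - j.1) n, w m)
  else
    s * ((Emat lam α w n (n - (2*n - 1 - j.1) + 1)).det /
      Real.sqrt (∏ m ∈ Finset.Ico (n - (2*n - 1 - j.1)) n, w m))

noncomputable def tmat (d e : ℕ → ℝ) (m : ℕ) : Matrix (Fin m) (Fin m) ℝ :=
  Matrix.of fun i j => if i.1 = j.1 then d i.1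
    else if i.1 + 1 = j.1 ∨ j.1 + 1 = i.1 then e (min i.1 j.1) else 0
lemma val_one_fin (m : ℕ) : ((1 : Fin (m+2)) : ℕ) = 1 := rfl

lemma tmat_det_rec (d e : ℕ → ℝ) (m : ℕ) :
    (tmat d e (m+2)).det
      = d 0 * (tmat (fun i => d (i+1)) (fun i => e (i+1)) (m+1)).det
        - e 0 ^ 2 * (tmat (fun i => d (i+2)) (fun i => e (i+2)) m).det := by
  set B := (tmat d e (m+2)).submatrix Fin.succ ((1 : Fin (m+2)).succAbove) with hB
  have hsA0 : ((1 : Fin (m+2)).succAbove 0).1 = 0 := by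
    rw [Fin.succAbove, if_pos (by simp [Fin.lt_def])]
    simp
  have hsA : ∀ j : Fin m, ((1 : Fin (m+2)).succAbove j.succ).1 = j.1 + 2 := by
    intro j
    rw [Fin.succAbove, if_neg (by simp [Fin.lt_def])]
    simp
  have hminor0 : (tmat d e (m+2)).submatrix Fin.succ ((0 : Fin (m+2)).succAbove)
      = tmat (fun i => d (i+1)) (fun i => e (i+1)) (m+1) := by
    ext i j
    simp only [Matrix.submatrix_apply, tmat, Matrix.of_apply, Fin.zero_succAbove, Fin.val_succ]
    have hmin : min (i.1+1) (j.1+1) = min i.1 j.1 + 1 := by omega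
    by_cases h : i.1 = j.1
    · simp [h]
    · rw [if_neg (by omega), if_neg h]
      by_cases h2 : i.1 + 1 = j.1 ∨ j.1 + 1 = i.1
      · rw [if_pos (by omega), if_pos h2, hmin]
      · rw [if_neg (by omega), if_neg h2]
  have hminor11 : B.submatrix ((0 : Fin (m+1)).succAbove) Fin.succ
      = tmat (fun i => d (i+2)) (fun i => e (i+2)) m := by
    ext i j
    simp only [hB, Matrix.submatrix_apply, tmat, Matrix.of_apply, Fin.zero_succAbove,
      Fin.val_succ, hsA j]
    have hmin : min (i.1+2) (j.1+2) = min i.1 j.1 + 2 := by omega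
    by_cases h : i.1 = j.1
    · simp [h]
    · rw [if_neg (by omega), if_neg h]
      by_cases h2 : i.1 + 1 = j.1 ∨ j.1 + 1 = i.1
      · rw [if_pos (by omega), if_pos h2, hmin]
      · rw [if_neg (by omega), if_neg h2]
  have hB00 : B 0 0 = e 0 := by
    simp only [hB, Matrix.submatrix_apply, tmat, Matrix.of_apply, Fin.val_succ, hsA0, Fin.val_zero]
    norm_num
  have hdet1 : B.det = e 0 * (tmat (fun i => d (i+2)) (fun i => e (i+2)) m).det := by
    rw [Matrix.det_succ_column_zero, Fin.sum_univ_succ]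
    have tail : ∀ i : Fin m, (-1:ℝ)^((i.succ : Fin (m+1)) : ℕ) * B i.succ 0 *
        (B.submatrix i.succ.succAbove Fin.succ).det = 0 := by
      intro i
      have : B i.succ 0 = 0 := by
        simp only [hB, Matrix.submatrix_apply, tmat, Matrix.of_apply, Fin.val_succ, hsA0]
        rw [if_neg (by omega), if_neg (by omega)]
      rw [this]; ring
    rw [Finset.sum_eq_zero (fun i _ => tail i), hminor11, hB00]
    simp
  rw [Matrix.det_succ_row_zero, Fin.sum_univ_succ, Fin.sum_univ_succ]
  have tail2 : ∀ j : Fin m, (-1:ℝ)^((j.succ.succ : Fin (m+2)) : ℕ) * tmat d e (m+2) 0 j.succ.succ *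
      ((tmat d e (m+2)).submatrix Fin.succ j.succ.succ.succAbove).det = 0 := by
    intro j
    have : tmat d e (m+2) 0 j.succ.succ = 0 := by
      simp only [tmat, Matrix.of_apply, Fin.val_succ, Fin.val_zero]
      split_ifs <;> simp_all
    rw [this]; ring
  rw [Finset.sum_eq_zero (fun j _ => tail2 j)]
  have h00 : tmat d e (m+2) 0 0 = d 0 := by simp [tmat]
  have h01 : tmat d e (m+2) 0 1 = e 0 := by
    simp only [tmat, Matrix.of_apply, Fin.val_zero, val_one_fin]
    norm_num
  have hsucc1 : (Fin.succ (0 : Fin (m+1))) = (1 : Fin (m+2)) := rfl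
  rw [hsucc1, h00, h01, hminor0, ← hB, hdet1]
  rw [Fin.val_zero, val_one_fin]
  norm_num
  ring
lemma Edet_eq (lam : ℝ) (α w : ℕ → ℝ) (n k N : ℕ) (h : n + 1 - k = N) :
    (Emat lam α w n k).det
      = (tmat (fun i => lam - α (k + i)) (fun i => -Real.sqrt (w (k + i))) N).det := by
  subst h
  rw [← Matrix.det_submatrix_equiv_self Fin.revPerm (Emat lam α w n k)]
  congr 1
  ext i j
  have hi := i.2
  have hj := j.2
  simp only [Matrix.submatrix_apply, Emat, tmat, Matrix.of_apply, Fin.revPerm_apply, Fin.val_rev]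
  by_cases h : i.1 = j.1
  · rw [if_pos (by omega), if_pos h]
    congr 1
    congr 1
    omega
  · rw [if_neg (by omega), if_neg h]
    by_cases h2 : i.1 + 1 = j.1 ∨ j.1 + 1 = i.1
    · rw [if_pos (by omega), if_pos h2]
      have : n - 1 - min (n + 1 - k - (i.1 + 1)) (n + 1 - k - (j.1 + 1)) = k + min i.1 j.1 := by
        omega
      rw [this]
    · rw [if_neg (by omega), if_neg h2]

lemma Edet_top (lam : ℝ) (α w : ℕ → ℝ) (n : ℕ) : (Emat lam α w n (n+1)).det = 1 := by
  rw [Edet_eq lam α w n (n+1) 0 (by omega)]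
  exact Matrix.det_fin_zero

lemma Edet_n (lam : ℝ) (α w : ℕ → ℝ) (n : ℕ) :
    (Emat lam α w n n).det = lam - α n := by
  rw [Edet_eq lam α w n n 1 (by omega), Matrix.det_fin_one]
  simp [tmat]

lemma Edet_rec (lam : ℝ) (α w : ℕ → ℝ) (n k : ℕ) (hk : k + 1 ≤ n) (hwk : 0 ≤ w k) :
    (Emat lam α w n k).det
      = (lam - α k) * (Emat lam α w n (k+1)).det - w k * (Emat lam α w n (k+2)).det := by
  rw [Edet_eq lam α w n k (n-1-k+2) (by omega), tmat_det_rec]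
  have e1 : (fun i => lam - α (k + (i+1))) = (fun i => lam - α (k+1+i)) := by
    funext i
    have : k + (i+1) = k+1+i := by omega
    rw [this]
  have e2 : (fun i => -Real.sqrt (w (k + (i+1)))) = (fun i => -Real.sqrt (w (k+1+i))) := by
    funext i
    have : k + (i+1) = k+1+i := by omega
    rw [this]
  have e3 : (fun i => lam - α (k + (i+2))) = (fun i => lam - α (k+2+i)) := by
    funext i
    have : k + (i+2) = k+2+i := by omega
    rw [this]
  have e4 : (fun i => -Real.sqrt (w (k + (i+2)))) = (fun i => -Real.sqrt (w (k+2+i))) := by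
    funext i
    have : k + (i+2) = k+2+i := by omega
    rw [this]
  rw [e1, e2, e3, e4, ← Edet_eq lam α w n (k+1) (n-1-k+1) (by omega),
    ← Edet_eq lam α w n (k+2) (n-1-k) (by omega)]
  have : (-Real.sqrt (w (k + 0))) ^ 2 = w k := by
    rw [neg_pow, Real.sq_sqrt (by simpa using hwk)]
    simp
  rw [this]
  norm_num
lemma sum_ite_fin {m c : ℕ} (g : Fin m → ℝ) :
    (∑ j : Fin m, if j.1 = c then g j else 0) = if h : c < m then g ⟨c, h⟩ else 0 := by
  split
  · next h =>
    rw [Finset.sum_eq_single (⟨c, h⟩ : Fin m)]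
    · simp
    · intro j _ hj
      rw [if_neg (by simpa [Fin.ext_iff] using hj)]
    · simp
  · next h =>
    apply Finset.sum_eq_zero
    intro j _
    rw [if_neg (by have := j.2; omega)]

lemma tri_row {m : ℕ} (M : Matrix (Fin m) (Fin m) ℝ) (v : Fin m → ℝ) (i : Fin m)
    (hM : ∀ j : Fin m, j.1 + 1 < i.1 ∨ i.1 + 1 < j.1 → M i j = 0) :
    M.mulVec v i =
      (if h : 1 ≤ i.1 then M i ⟨i.1-1, by omega⟩ * v ⟨i.1-1, by omega⟩ else 0)
      + M i i * v i
      + (if h : i.1+1 < m then M i ⟨i.1+1, h⟩ * v ⟨i.1+1, h⟩ else 0) := by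
  have key : ∀ j : Fin m, M i j * v j =
      (if 1 ≤ i.1 then (if j.1 = i.1 - 1 then M i j * v j else 0) else 0)
      + (if j = i then M i j * v j else 0)
      + (if j.1 = i.1 + 1 then M i j * v j else 0) := by
    intro j
    by_cases hz : j.1 + 1 < i.1 ∨ i.1 + 1 < j.1
    · rw [hM j hz]
      simp
    · simp only [Fin.ext_iff]
      split_ifs <;> (first | ring1 | (exfalso; omega))
  show (∑ j, M i j * v j) = _
  rw [Finset.sum_congr rfl (fun j _ => key j), Finset.sum_add_distrib, Finset.sum_add_distrib]
  have hA : (∑ j : Fin m, if 1 ≤ i.1 then (if j.1 = i.1 - 1 then M i j * v j else 0) else 0)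
      = (if h : 1 ≤ i.1 then M i ⟨i.1-1, by omega⟩ * v ⟨i.1-1, by omega⟩ else 0) := by
    by_cases h1 : 1 ≤ i.1
    · rw [dif_pos h1, Finset.sum_congr rfl (fun j _ => if_pos h1), sum_ite_fin, dif_pos (by omega)]
    · rw [dif_neg h1, Finset.sum_congr rfl (fun j _ => if_neg h1), Finset.sum_const_zero]
  have hB : (∑ j : Fin m, if j = i then M i j * v j else 0) = M i i * v i := by
    rw [Finset.sum_ite_eq' Finset.univ i (fun j => M i j * v j), if_pos (Finset.mem_univ i)]
  have hC : (∑ j : Fin m, if j.1 = i.1 + 1 then M i j * v j else 0)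
      = (if h : i.1+1 < m then M i ⟨i.1+1, h⟩ * v ⟨i.1+1, h⟩ else 0) := by
    rw [sum_ite_fin]
  rw [hA, hB, hC]



lemma Jmat_adj (α w : ℕ → ℝ) (n : ℕ) (i j : Fin (2*n)) (c : ℕ)
    (hne : ¬ i.1 = j.1) (h : i.1 + 1 = j.1 ∨ j.1 + 1 = i.1)
    (hc : (((n : ℤ) - 1 - (min i.1 j.1 : ℤ)).natAbs) = c) :
    Jmat α w n i j = Real.sqrt (w c) := by
  simp only [Jmat, Matrix.of_apply]
  rw [if_neg hne, if_pos h, hc]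

lemma Jmat_diag_lo (α w : ℕ → ℝ) (n : ℕ) (i j : Fin (2*n))
    (h : i.1 = j.1) (h2 : i.1 ≤ n - 1) : Jmat α w n i j = α (n - i.1) := by
  simp only [Jmat, Matrix.of_apply]
  rw [if_pos h, if_pos h2]

lemma Jmat_diag_hi (α w : ℕ → ℝ) (n : ℕ) (i j : Fin (2*n))
    (h : i.1 = j.1) (h2 : ¬ i.1 ≤ n - 1) : Jmat α w n i j = α (i.1 - n + 1) := by
  simp only [Jmat, Matrix.of_apply]
  rw [if_pos h, if_neg h2]

lemma alg_interior (a b q lam al D1 D2 D3 : ℝ) (ha : a ≠ 0) (hb : b ≠ 0) (hq : q ≠ 0)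
    (hrec : D3 = (lam - al) * D2 - a^2 * D1) :
    a * (D1 / q) + al * (D2 / (a*q)) + b * (D3 / (b*(a*q))) = lam * (D2 / (a*q)) := by
  subst hrec; field_simp; ring

lemma alg_interior' (a b q lam al D1 D2 D3 : ℝ) (ha : a ≠ 0) (hb : b ≠ 0) (hq : q ≠ 0)
    (hrec : D3 = (lam - al) * D2 - a^2 * D1) :
    b * (D3 / (b*(a*q))) + al * (D2 / (a*q)) + a * (D1 / q) = lam * (D2 / (a*q)) := by
  rw [← alg_interior a b q lam al D1 D2 D3 ha hb hq hrec]; ring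

lemma alg_mid (b q lam al s0 D2 D3 : ℝ) (hb : b ≠ 0) (hq : q ≠ 0)
    (hcond : (lam - al - s0) * D2 - b^2 * D3 = 0) :
    b * (D3 / q) + al * (D2 / (b*q)) + s0 * (D2 / (b*q)) = lam * (D2 / (b*q)) := by
  have h : b * (D3 / q) = ((lam - al - s0) * D2) / (b * q) := by
    rw [show (lam - al - s0) * D2 = b^2 * D3 from by linarith]
    field_simp
  rw [h, ← mul_div_assoc, ← mul_div_assoc, ← mul_div_assoc, ← add_div, ← add_div]
  congr 1
  ring

lemma alg_mid' (b q lam al s0 D2 D3 : ℝ) (hb : b ≠ 0) (hq : q ≠ 0)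
    (hcond : (lam - al - s0) * D2 - b^2 * D3 = 0) :
    s0 * (D2 / (b*q)) + al * (D2 / (b*q)) + b * (D3 / q) = lam * (D2 / (b*q)) := by
  rw [← alg_mid b q lam al s0 D2 D3 hb hq hcond]; ring


/-- If `λ` satisfies `(λ - α_1 - √w_0)·det(E_2) - w_1·det(E_3) = 0`, then the symmetric
vector `v` is an eigenvector of `J_{2n}` with eigenvalue `λ`. -/
theorem eigenvector_symmetric_branch
    (n : ℕ) (hn : 2 ≤ n) (α w : ℕ → ℝ) (hw : ∀ i, i < n → 0 < w i) (lam : ℝ)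
    (hcond : (lam - α 1 - Real.sqrt (w 0)) * (Emat lam α w n 2).det
        - w 1 * (Emat lam α w n 3).det = 0) :
    vsym lam α w n 1 ≠ 0 ∧
    (Jmat α w n).mulVec (vsym lam α w n 1) = lam • vsym lam α w n 1 := by
  have hval : ∀ (j : Fin (2*n)) (t : ℕ), t < n → (j.1 = t ∨ j.1 = 2*n-1-t) →
      vsym lam α w n 1 j
        = (Emat lam α w n (n - t + 1)).det / Real.sqrt (∏ m ∈ Finset.Ico (n - t) n, w m) := by
    intro j t ht hj
    rcases hj with h | h
    · simp only [vsym]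
      rw [if_pos (by omega), h]
    · simp only [vsym]
      rw [if_neg (by omega), show 2*n - 1 - j.1 = t from by omega, one_mul]
  have hsplit : ∀ a, a < n → Real.sqrt (∏ m ∈ Finset.Ico a n, w m)
      = Real.sqrt (w a) * Real.sqrt (∏ m ∈ Finset.Ico (a+1) n, w m) := by
    intro a ha
    rw [Finset.prod_eq_prod_Ico_succ_bot ha, Real.sqrt_mul (le_of_lt (hw a ha))]
  have hqpos : ∀ a : ℕ, (0:ℝ) < Real.sqrt (∏ m ∈ Finset.Ico a n, w m) := by
    intro a
    apply Real.sqrt_pos.mpr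
    apply Finset.prod_pos
    intro m hm
    exact hw m (Finset.mem_Ico.mp hm).2
  have hwpos : ∀ a : ℕ, a < n → (0:ℝ) < Real.sqrt (w a) := by
    intro a ha
    exact Real.sqrt_pos.mpr (hw a ha)
  constructor
  · intro hzero
    have h0 : (0:ℕ) < 2*n := by omega
    have hc := congrFun hzero ⟨0, h0⟩
    rw [hval ⟨0, h0⟩ 0 (by omega) (Or.inl rfl), Pi.zero_apply, Nat.sub_zero, Edet_top,
      Finset.Ico_self, Finset.prod_empty, Real.sqrt_one, div_one] at hc
    exact one_ne_zero hc
  · funext i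
    have hi2 := i.2
    have hJtri : ∀ j : Fin (2*n), j.1 + 1 < i.1 ∨ i.1 + 1 < j.1 → Jmat α w n i j = 0 := by
      intro j hj
      simp only [Jmat, Matrix.of_apply]
      rw [if_neg (by omega), if_neg (by omega)]
    rw [tri_row _ _ i hJtri, Pi.smul_apply, smul_eq_mul]
    by_cases c0 : i.1 = 0
    · -- first row
      rw [dif_neg (by omega), dif_pos (by omega)]
      rw [hval i 0 (by omega) (Or.inl c0),
        hval ⟨i.1+1, by omega⟩ 1 (by omega) (Or.inl (by simp only [Fin.val_mk]; omega)),
        Jmat_diag_lo α w n i i rfl (by omega),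
        Jmat_adj α w n i ⟨i.1+1, by omega⟩ (n-1) (by simp only [Fin.val_mk]; omega)
          (Or.inl rfl) (by simp only [Fin.val_mk]; omega)]
      rw [Nat.sub_zero, Edet_top, Finset.Ico_self, Finset.prod_empty, Real.sqrt_one, div_one,
        show n - 1 + 1 = n from by omega, Edet_n, hsplit (n-1) (by omega),
        show n - 1 + 1 = n from by omega, Finset.Ico_self, Finset.prod_empty, Real.sqrt_one,
        mul_one, c0, Nat.sub_zero]
      have hs := (hwpos (n-1) (by omega)).ne'
      field_simp
      ring
    · by_cases cf : i.1 = 2*n - 1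
      · -- last row
        rw [dif_pos (by omega), dif_neg (by omega)]
        rw [hval ⟨i.1-1, by omega⟩ 1 (by omega) (Or.inr (by simp only [Fin.val_mk]; omega)),
          hval i 0 (by omega) (Or.inr (by omega)),
          Jmat_adj α w n i ⟨i.1-1, by omega⟩ (n-1) (by simp only [Fin.val_mk]; omega)
            (Or.inr (by simp only [Fin.val_mk]; omega))
            (by simp only [Fin.val_mk]; omega),
          Jmat_diag_hi α w n i i rfl (by omega),
          show i.1 - n + 1 = n from by omega]
        rw [Nat.sub_zero, Edet_top, Finset.Ico_self, Finset.prod_empty, Real.sqrt_one, div_one,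
          show n - 1 + 1 = n from by omega, Edet_n, hsplit (n-1) (by omega),
          show n - 1 + 1 = n from by omega, Finset.Ico_self, Finset.prod_empty, Real.sqrt_one,
          mul_one]
        have hs := (hwpos (n-1) (by omega)).ne'
        field_simp
        ring
      · by_cases cb : i.1 ≤ n - 2
        · -- interior row, first half
          obtain ⟨k, hk1, hk2, hik⟩ : ∃ k, 2 ≤ k ∧ k + 1 ≤ n ∧ i.1 = n - k :=
            ⟨n - i.1, by omega, by omega, by omega⟩
          rw [dif_pos (by omega), dif_pos (by omega)]
          rw [hval ⟨i.1-1, by omega⟩ (n-k-1) (by omega) (Or.inl (by simp only [Fin.val_mk]; omega)),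
            hval i (n-k) (by omega) (Or.inl (by omega)),
            hval ⟨i.1+1, by omega⟩ (n-k+1) (by omega) (Or.inl (by simp only [Fin.val_mk]; omega)),
            Jmat_adj α w n i ⟨i.1-1, by omega⟩ k (by simp only [Fin.val_mk]; omega)
              (Or.inr (by simp only [Fin.val_mk]; omega))
              (by simp only [Fin.val_mk]; omega),
            Jmat_diag_lo α w n i i rfl (by omega),
            show n - i.1 = k from by omega,
            Jmat_adj α w n i ⟨i.1+1, by omega⟩ (k-1) (by simp only [Fin.val_mk]; omega)
              (Or.inl rfl)
              (by simp only [Fin.val_mk]; omega)]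
          rw [show n - (n-k-1) + 1 = k + 2 from by omega,
            show n - (n-k-1) = k+1 from by omega,
            show n - (n-k) + 1 = k+1 from by omega,
            show n - (n-k) = k from by omega,
            show n - (n-k+1) + 1 = k from by omega,
            show n - (n-k+1) = k-1 from by omega,
            hsplit (k-1) (by omega), show k-1+1 = k from by omega, hsplit k (by omega)]
          exact alg_interior (Real.sqrt (w k)) (Real.sqrt (w (k-1)))
            (Real.sqrt (∏ m ∈ Finset.Ico (k+1) n, w m)) lam (α k)
            ((Emat lam α w n (k+2)).det) ((Emat lam α w n (k+1)).det) ((Emat lam α w n k).det)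
            (hwpos k (by omega)).ne' (hwpos (k-1) (by omega)).ne' (hqpos _).ne'
            (by rw [Real.sq_sqrt (hw k (by omega)).le]
                exact Edet_rec lam α w n k (by omega) (hw k (by omega)).le)
        · by_cases cc : i.1 = n - 1
          · -- middle-left row
            rw [dif_pos (by omega), dif_pos (by omega)]
            rw [hval ⟨i.1-1, by omega⟩ (n-2) (by omega) (Or.inl (by simp only [Fin.val_mk]; omega)),
              hval i (n-1) (by omega) (Or.inl (by omega)),
              hval ⟨i.1+1, by omega⟩ (n-1) (by omega) (Or.inr (by simp only [Fin.val_mk]; omega)),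
              Jmat_adj α w n i ⟨i.1-1, by omega⟩ 1 (by simp only [Fin.val_mk]; omega)
                (Or.inr (by simp only [Fin.val_mk]; omega))
                (by simp only [Fin.val_mk]; omega),
              Jmat_diag_lo α w n i i rfl (by omega),
              show n - i.1 = 1 from by omega,
              Jmat_adj α w n i ⟨i.1+1, by omega⟩ 0 (by simp only [Fin.val_mk]; omega)
                (Or.inl rfl)
                (by simp only [Fin.val_mk]; omega)]
            rw [show n - (n-2) + 1 = 3 from by omega,
              show n - (n-2) = 2 from by omega,
              show n - (n-1) + 1 = 2 from by omega,
              show n - (n-1) = 1 from by omega,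
              hsplit 1 (by omega), show (1:ℕ)+1 = 2 from rfl]
            exact alg_mid (Real.sqrt (w 1)) (Real.sqrt (∏ m ∈ Finset.Ico 2 n, w m)) lam (α 1)
              (Real.sqrt (w 0)) ((Emat lam α w n 2).det) ((Emat lam α w n 3).det)
              (hwpos 1 (by omega)).ne' (hqpos _).ne'
              (by rw [Real.sq_sqrt (hw 1 (by omega)).le]; exact hcond)
          · by_cases cd : i.1 = n
            · -- middle-right row
              rw [dif_pos (by omega), dif_pos (by omega)]
              rw [hval ⟨i.1-1, by omega⟩ (n-1) (by omega) (Or.inl (by simp only [Fin.val_mk]; omega)),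
                hval i (n-1) (by omega) (Or.inr (by omega)),
                hval ⟨i.1+1, by omega⟩ (n-2) (by omega)
                  (Or.inr (by simp only [Fin.val_mk]; omega)),
                Jmat_adj α w n i ⟨i.1-1, by omega⟩ 0 (by simp only [Fin.val_mk]; omega)
                  (Or.inr (by simp only [Fin.val_mk]; omega))
                  (by simp only [Fin.val_mk]; omega),
                Jmat_diag_hi α w n i i rfl (by omega),
                show i.1 - n + 1 = 1 from by omega,
                Jmat_adj α w n i ⟨i.1+1, by omega⟩ 1 (by simp only [Fin.val_mk]; omega)
                  (Or.inl rfl)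
                  (by simp only [Fin.val_mk]; omega)]
              rw [show n - (n-2) + 1 = 3 from by omega,
                show n - (n-2) = 2 from by omega,
                show n - (n-1) + 1 = 2 from by omega,
                show n - (n-1) = 1 from by omega,
                hsplit 1 (by omega), show (1:ℕ)+1 = 2 from rfl]
              exact alg_mid' (Real.sqrt (w 1)) (Real.sqrt (∏ m ∈ Finset.Ico 2 n, w m)) lam (α 1)
                (Real.sqrt (w 0)) ((Emat lam α w n 2).det) ((Emat lam α w n 3).det)
                (hwpos 1 (by omega)).ne' (hqpos _).ne'
                (by rw [Real.sq_sqrt (hw 1 (by omega)).le]; exact hcond)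
            · -- interior row, second half
              obtain ⟨k, hk1, hk2, hik⟩ : ∃ k, 2 ≤ k ∧ k + 1 ≤ n ∧ i.1 = n + k - 1 :=
                ⟨i.1 - n + 1, by omega, by omega, by omega⟩
              rw [dif_pos (by omega), dif_pos (by omega)]
              rw [hval ⟨i.1-1, by omega⟩ (n-k+1) (by omega)
                  (Or.inr (by simp only [Fin.val_mk]; omega)),
                hval i (n-k) (by omega) (Or.inr (by omega)),
                hval ⟨i.1+1, by omega⟩ (n-k-1) (by omega)
                  (Or.inr (by simp only [Fin.val_mk]; omega)),
                Jmat_adj α w n i ⟨i.1-1, by omega⟩ (k-1) (by simp only [Fin.val_mk]; omega)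
                  (Or.inr (by simp only [Fin.val_mk]; omega))
                  (by simp only [Fin.val_mk]; omega),
                Jmat_diag_hi α w n i i rfl (by omega),
                show i.1 - n + 1 = k from by omega,
                Jmat_adj α w n i ⟨i.1+1, by omega⟩ k (by simp only [Fin.val_mk]; omega)
                  (Or.inl rfl)
                  (by simp only [Fin.val_mk]; omega)]
              rw [show n - (n-k-1) + 1 = k + 2 from by omega,
                show n - (n-k-1) = k+1 from by omega,
                show n - (n-k) + 1 = k+1 from by omega,
                show n - (n-k) = k from by omega,
                show n - (n-k+1) + 1 = k from by omega,
                show n - (n-k+1) = k-1 from by omega,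
                hsplit (k-1) (by omega), show k-1+1 = k from by omega, hsplit k (by omega)]
              exact alg_interior' (Real.sqrt (w k)) (Real.sqrt (w (k-1)))
                (Real.sqrt (∏ m ∈ Finset.Ico (k+1) n, w m)) lam (α k)
                ((Emat lam α w n (k+2)).det) ((Emat lam α w n (k+1)).det)
                ((Emat lam α w n k).det)
                (hwpos k (by omega)).ne' (hwpos (k-1) (by omega)).ne' (hqpos _).ne'
                (by rw [Real.sq_sqrt (hw k (by omega)).le]
                    exact Edet_rec lam α w n k (by omega) (hw k (by omega)).le)
end

section
/- Let 0 < p < 1, q = 1 − p, and let J_{2n}(p) be the 2n×2n symmetric tridiagonal matrix with zero diagonal, off-diagonal couplings √p at both extreme positions (1,2) and (2n−1,2n), coupling q at the central position (n, n+1), and coupling √(pq) at all other positions. Then λ = 1 and λ = −1 are eigenvalues of J_{2n}(p). -/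
/-- The `2n × 2n` Jacobi matrix `J_{2n}(p)` of the reduced random walk on the path
`P_{2n}`: zero diagonal, couplings `√p` at the extreme positions, `q = 1-p` at the
central position, and `√(pq)` elsewhere (0-based indices). -/
noncomputable def Jp (p : ℝ) (n : ℕ) : Matrix (Fin (2*n)) (Fin (2*n)) ℝ :=
  Matrix.of fun i j =>
    if i.1 + 1 = j.1 ∨ j.1 + 1 = i.1 then
      (if min i.1 j.1 = 0 ∨ min i.1 j.1 = 2*n - 2 then Real.sqrt p
       else if min i.1 j.1 = n - 1 then 1 - p
       else Real.sqrt (p * (1 - p)))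
    else 0

/-- Row-sum formula for a tridiagonal matrix. -/
lemma tri {N : ℕ} (A : Matrix (Fin N) (Fin N) ℝ)
    (hA : ∀ i j : Fin N, ¬(i.1 + 1 = j.1 ∨ j.1 + 1 = i.1) → A i j = 0)
    (v : Fin N → ℝ) (i : Fin N) :
    A.mulVec v i =
      (if h : i.1 + 1 < N then A i ⟨i.1 + 1, h⟩ * v ⟨i.1 + 1, h⟩ else 0) +
      (if _ : 1 ≤ i.1 then
        A i ⟨i.1 - 1, (Nat.sub_le i.1 1).trans_lt i.2⟩ *
          v ⟨i.1 - 1, (Nat.sub_le i.1 1).trans_lt i.2⟩ else 0) := by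
  have key : ∀ j : Fin N, A i j * v j =
      (if i.1 + 1 = j.1 then A i j * v j else 0) +
      (if j.1 + 1 = i.1 then A i j * v j else 0) := by
    intro j
    by_cases h1 : i.1 + 1 = j.1
    · rw [if_pos h1, if_neg (by omega)]; ring
    · rw [if_neg h1]
      by_cases h2 : j.1 + 1 = i.1
      · rw [if_pos h2]; ring
      · rw [if_neg h2, hA i j (by tauto)]; ring
  have hs : A.mulVec v i = ∑ j, A i j * v j := rfl
  rw [hs, Finset.sum_congr rfl fun j _ => key j, Finset.sum_add_distrib]
  congr 1
  · by_cases h : i.1 + 1 < N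
    · rw [dif_pos h]
      rw [Finset.sum_eq_single (⟨i.1 + 1, h⟩ : Fin N)]
      · rw [if_pos rfl]
      · intro b _ hb
        rw [if_neg]
        intro hc
        exact hb (Fin.ext hc.symm)
      · intro hb; exact absurd (Finset.mem_univ _) hb
    · rw [dif_neg h]
      apply Finset.sum_eq_zero
      intro j _
      rw [if_neg]
      have := j.2
      omega
  · by_cases h : 1 ≤ i.1
    · rw [dif_pos h]
      rw [Finset.sum_eq_single (⟨i.1 - 1, (Nat.sub_le i.1 1).trans_lt i.2⟩ : Fin N)]
      · rw [if_pos (by simp only [Fin.val_mk]; omega)]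
      · intro b _ hb
        rw [if_neg]
        intro hc
        exact hb (Fin.ext (by simp only [Fin.val_mk]; omega))
      · intro hb; exact absurd (Finset.mem_univ _) hb
    · rw [dif_neg h]
      apply Finset.sum_eq_zero
      intro j _
      rw [if_neg]
      omega

lemma Jp_offband (p : ℝ) (n : ℕ) :
    ∀ i j : Fin (2*n), ¬(i.1 + 1 = j.1 ∨ j.1 + 1 = i.1) → Jp p n i j = 0 := by
  intro i j h
  simp only [Jp, Matrix.of_apply, if_neg h]

lemma Jp_succ (p : ℝ) (n : ℕ) (i : ℕ) (hi : i < 2*n) (h : i + 1 < 2*n) :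
    Jp p n ⟨i, hi⟩ ⟨i + 1, h⟩ =
      if i = 0 ∨ i = 2*n - 2 then Real.sqrt p
      else if i = n - 1 then 1 - p
      else Real.sqrt (p * (1 - p)) := by
  have hm : min i (i + 1) = i := by omega
  simp only [Jp, Matrix.of_apply, Fin.val_mk, hm, eq_self_iff_true, true_or, if_true]

lemma Jp_pred (p : ℝ) (n : ℕ) (i : ℕ) (hi : i < 2*n) (h1 : 1 ≤ i) :
    Jp p n ⟨i, hi⟩ ⟨i - 1, by omega⟩ =
      if i - 1 = 0 ∨ i - 1 = 2*n - 2 then Real.sqrt p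
      else if i - 1 = n - 1 then 1 - p
      else Real.sqrt (p * (1 - p)) := by
  have hm : min i (i - 1) = i - 1 := by omega
  have hc : (i - 1) + 1 = i := by omega
  simp only [Jp, Matrix.of_apply, Fin.val_mk, hm, hc, eq_self_iff_true, or_true, if_true]

/-- Value profile of the eigenvector (square root of the stationary measure). -/
noncomputable def wv (p : ℝ) (n : ℕ) : ℕ → ℝ
  | 0 => (Real.sqrt p) ^ (n - 1)
  | (m + 1) => (Real.sqrt p) ^ (n - 2 - m) * (Real.sqrt (1 - p)) ^ m

lemma wv_zero (p : ℝ) (n : ℕ) : wv p n 0 = (Real.sqrt p) ^ (n - 1) := rfl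
lemma wv_succ (p : ℝ) (n : ℕ) (m : ℕ) :
    wv p n (m + 1) = (Real.sqrt p) ^ (n - 2 - m) * (Real.sqrt (1 - p)) ^ m := rfl

/-- The eigenvector for eigenvalue `1`. -/
noncomputable def vEig (p : ℝ) (n : ℕ) (i : Fin (2*n)) : ℝ :=
  wv p n (min i.1 (2*n - 1 - i.1))

lemma vEig_mk (p : ℝ) (n : ℕ) (m : ℕ) (h : m < 2*n) :
    vEig p n ⟨m, h⟩ = wv p n (min m (2*n - 1 - m)) := rfl

lemma vEig_eval0 (p : ℝ) (n m : ℕ) (h : m < 2*n) (e : ℕ)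
    (hk : min m (2*n - 1 - m) = 0) (he : e = n - 1) :
    vEig p n ⟨m, h⟩ = Real.sqrt p ^ e := by
  rw [vEig_mk, hk, wv_zero, he]

lemma vEig_evalS (p : ℝ) (n m : ℕ) (h : m < 2*n) (e f : ℕ)
    (h0 : min m (2*n - 1 - m) ≠ 0)
    (he : e = n - 2 - (min m (2*n - 1 - m) - 1))
    (hf : f = min m (2*n - 1 - m) - 1) :
    vEig p n ⟨m, h⟩ = Real.sqrt p ^ e * Real.sqrt (1 - p) ^ f := by
  obtain ⟨j, hj⟩ : ∃ j, min m (2*n - 1 - m) = j + 1 :=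
    ⟨min m (2*n - 1 - m) - 1, by omega⟩
  rw [vEig_mk, hj, wv_succ, he, hf, hj]
  simp

lemma key (p : ℝ) (hp : 0 < p) (hp1 : p < 1) (n : ℕ) (hn : 2 ≤ n) :
    (Jp p n).mulVec (vEig p n) = vEig p n := by
  have ha2 : Real.sqrt p ^ 2 = p := Real.sq_sqrt hp.le
  have hb2 : Real.sqrt (1 - p) ^ 2 = 1 - p := Real.sq_sqrt (by linarith)
  have hab : Real.sqrt p ^ 2 + Real.sqrt (1 - p) ^ 2 = 1 := by
    rw [ha2, hb2]; ring
  have hmul' : Real.sqrt (p * (1 - p)) = Real.sqrt p * Real.sqrt (1 - p) :=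
    Real.sqrt_mul hp.le _
  funext i
  obtain ⟨i, hi⟩ := i
  rw [tri _ (Jp_offband p n) (vEig p n) ⟨i, hi⟩]
  simp only [Fin.val_mk]
  by_cases h0 : i = 0
  · subst h0
    rw [dif_pos (show 0 + 1 < 2*n by omega), dif_neg (show ¬ 1 ≤ 0 by omega),
      Jp_succ p n 0 hi (by omega),
      vEig_evalS p n (0 + 1) (by omega) (n - 2) 0 (by omega) (by omega) (by omega),
      vEig_eval0 p n 0 hi (n - 1) (by omega) rfl]
    split_ifs <;>
      first
        | (exfalso; omega)
        | (rw [show n - 1 = (n - 2) + 1 by omega, pow_succ]; ring)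
  by_cases hL : i = 2*n - 1
  · subst hL
    rw [dif_neg (show ¬ (2*n - 1 + 1 < 2*n) by omega),
      dif_pos (show 1 ≤ 2*n - 1 by omega),
      Jp_pred p n (2*n - 1) hi (by omega),
      vEig_evalS p n (2*n - 1 - 1) (by omega) (n - 2) 0 (by omega) (by omega) (by omega),
      vEig_eval0 p n (2*n - 1) hi (n - 1) (by omega) rfl]
    split_ifs <;>
      first
        | (exfalso; omega)
        | (rw [show n - 1 = (n - 2) + 1 by omega, pow_succ]; ring)
  -- interior indices
  rw [dif_pos (show i + 1 < 2*n by omega), dif_pos (show 1 ≤ i by omega),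
    Jp_succ p n i hi (by omega), Jp_pred p n i hi (by omega), hmul']
  by_cases h1 : i = 1
  · by_cases hn2 : n = 2
    · subst hn2
      rw [vEig_evalS p 2 (i + 1) (by omega) 0 0 (by omega) (by omega) (by omega),
        vEig_eval0 p 2 (i - 1) (by omega) 1 (by omega) (by omega),
        vEig_evalS p 2 i hi 0 0 (by omega) (by omega) (by omega)]
      split_ifs <;> first | (exfalso; omega) | linear_combination ha2
    · obtain ⟨m, hm⟩ : ∃ m, n = m + 3 := ⟨n - 3, by omega⟩
      rw [vEig_evalS p n (i + 1) (by omega) m 1 (by omega) (by omega) (by omega),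
        vEig_eval0 p n (i - 1) (by omega) (m + 2) (by omega) (by omega),
        vEig_evalS p n i hi (m + 1) 0 (by omega) (by omega) (by omega)]
      split_ifs <;>
        first | (exfalso; omega) | linear_combination (Real.sqrt p ^ (m + 1)) * hab
  by_cases hn1 : i = n - 1
  · obtain ⟨m, hm⟩ : ∃ m, n = m + 3 := ⟨n - 3, by omega⟩
    rw [vEig_evalS p n (i + 1) (by omega) 0 (m + 1) (by omega) (by omega) (by omega),
      vEig_evalS p n (i - 1) (by omega) 1 m (by omega) (by omega) (by omega),
      vEig_evalS p n i hi 0 (m + 1) (by omega) (by omega) (by omega)]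
    split_ifs <;>
      first | (exfalso; omega) | linear_combination (Real.sqrt (1 - p) ^ (m + 1)) * ha2
  by_cases hnn : i = n
  · by_cases hn2 : n = 2
    · subst hn2
      rw [vEig_evalS p 2 (i - 1) (by omega) 0 0 (by omega) (by omega) (by omega),
        vEig_eval0 p 2 (i + 1) (by omega) 1 (by omega) (by omega),
        vEig_evalS p 2 i hi 0 0 (by omega) (by omega) (by omega)]
      split_ifs <;> first | (exfalso; omega) | linear_combination ha2
    · obtain ⟨m, hm⟩ : ∃ m, n = m + 3 := ⟨n - 3, by omega⟩
      rw [vEig_evalS p n (i + 1) (by omega) 1 m (by omega) (by omega) (by omega),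
        vEig_evalS p n (i - 1) (by omega) 0 (m + 1) (by omega) (by omega) (by omega),
        vEig_evalS p n i hi 0 (m + 1) (by omega) (by omega) (by omega)]
      split_ifs <;>
        first | (exfalso; omega) | linear_combination (Real.sqrt (1 - p) ^ (m + 1)) * ha2
  by_cases h2 : i = 2*n - 2
  · obtain ⟨m, hm⟩ : ∃ m, n = m + 3 := ⟨n - 3, by omega⟩
    rw [vEig_eval0 p n (i + 1) (by omega) (m + 2) (by omega) (by omega),
      vEig_evalS p n (i - 1) (by omega) m 1 (by omega) (by omega) (by omega),
      vEig_evalS p n i hi (m + 1) 0 (by omega) (by omega) (by omega)]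
    split_ifs <;>
      first | (exfalso; omega) | linear_combination (Real.sqrt p ^ (m + 1)) * hab
  by_cases hC : i ≤ n - 2
  · obtain ⟨c, d, hc, hd⟩ : ∃ c d, i = c + 2 ∧ n = c + d + 4 :=
      ⟨i - 2, n - i - 2, by omega, by omega⟩
    rw [vEig_evalS p n (i + 1) (by omega) d (c + 2) (by omega) (by omega) (by omega),
      vEig_evalS p n (i - 1) (by omega) (d + 2) c (by omega) (by omega) (by omega),
      vEig_evalS p n i hi (d + 1) (c + 1) (by omega) (by omega) (by omega)]
    split_ifs <;>
      first
        | (exfalso; omega)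
        | linear_combination (Real.sqrt p ^ (d + 1) * Real.sqrt (1 - p) ^ (c + 1)) * hab
  · obtain ⟨c, d, hc, hd⟩ : ∃ c d, i = 2*c + d + 5 ∧ n = c + d + 4 :=
      ⟨i - n - 1, 2*n - 3 - i, by omega, by omega⟩
    rw [vEig_evalS p n (i + 1) (by omega) (c + 2) d (by omega) (by omega) (by omega),
      vEig_evalS p n (i - 1) (by omega) c (d + 2) (by omega) (by omega) (by omega),
      vEig_evalS p n i hi (c + 1) (d + 1) (by omega) (by omega) (by omega)]
    split_ifs <;>
      first
        | (exfalso; omega)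
        | linear_combination (Real.sqrt p ^ (c + 1) * Real.sqrt (1 - p) ^ (d + 1)) * hab

lemma alt {N : ℕ} (A : Matrix (Fin N) (Fin N) ℝ)
    (hA : ∀ i j : Fin N, ¬(i.1 + 1 = j.1 ∨ j.1 + 1 = i.1) → A i j = 0)
    (v : Fin N → ℝ) (hv : A.mulVec v = v) :
    A.mulVec (fun i => (-1 : ℝ) ^ i.1 * v i) = -fun i => (-1 : ℝ) ^ i.1 * v i := by
  funext i
  have h1 := congrFun hv i
  rw [tri A hA] at h1
  rw [tri A hA]
  simp only [Pi.neg_apply]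
  have e1 : ((-1 : ℝ)) ^ (i.1 + 1) = -(-1 : ℝ) ^ i.1 := by rw [pow_succ]; ring
  split_ifs at h1 ⊢ with hs hp hp
  · have e2 : ((-1 : ℝ)) ^ (i.1 - 1) = -(-1 : ℝ) ^ i.1 := by
      have h' : i.1 - 1 + 1 = i.1 := by omega
      have := pow_succ (-1 : ℝ) (i.1 - 1)
      rw [h'] at this
      rw [this]; ring
    rw [e1, e2]
    linear_combination (-(-1 : ℝ) ^ i.1) * h1
  · rw [e1]
    linear_combination (-(-1 : ℝ) ^ i.1) * h1
  · have e2 : ((-1 : ℝ)) ^ (i.1 - 1) = -(-1 : ℝ) ^ i.1 := by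
      have h' : i.1 - 1 + 1 = i.1 := by omega
      have := pow_succ (-1 : ℝ) (i.1 - 1)
      rw [h'] at this
      rw [this]; ring
    rw [e2]
    linear_combination (-(-1 : ℝ) ^ i.1) * h1
  · linear_combination (-(-1 : ℝ) ^ i.1) * h1

lemma vEig_ne_zero (p : ℝ) (hp : 0 < p) (n : ℕ) (hn : 2 ≤ n) :
    vEig p n ⟨0, by omega⟩ ≠ 0 := by
  rw [vEig_eval0 p n 0 (by omega) (n - 1) (by omega) rfl]
  exact pow_ne_zero _ (ne_of_gt (Real.sqrt_pos.mpr hp))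

/-- `λ = 1` and `λ = -1` are eigenvalues of `J_{2n}(p)`. -/
theorem one_and_negOne_eigenvalues
    (p : ℝ) (hp : 0 < p) (hp1 : p < 1) (n : ℕ) (hn : 2 ≤ n) :
    (∃ v : Fin (2*n) → ℝ, v ≠ 0 ∧ (Jp p n).mulVec v = v) ∧
    (∃ v : Fin (2*n) → ℝ, v ≠ 0 ∧ (Jp p n).mulVec v = -v) := by
  constructor
  · refine ⟨vEig p n, ?_, key p hp hp1 n hn⟩
    intro h
    exact vEig_ne_zero p hp n hn (congrFun h ⟨0, by omega⟩)
  · refine ⟨fun i => (-1 : ℝ) ^ i.1 * vEig p n i, ?_,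
      alt (Jp p n) (Jp_offband p n) (vEig p n) (key p hp hp1 n hn)⟩
    intro h
    have := congrFun h ⟨0, by omega⟩
    simp only [pow_zero, one_mul, Pi.zero_apply] at this
    exact vEig_ne_zero p hp n hn this
end

section
/- With D_k := det(F_k) satisfying D_k = λD_{k-1} − pq·D_{k-2}, D_0 = 1, D_1 = λ, and E'_k := det of the k×k tridiagonal matrix with diagonal λ, first off-diagonal coupling −√p and remaining couplings −√(pq): one has the identity (λ ∓ q)·E'_{n-1} − pq·E'_{n-2} = (λ ∓ 1)·{D_{n-1} ± p·D_{n-2}} for all n ≥ 3, where p + q = 1. -/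
/-- The sequence `D_k` with `D_0 = 1`, `D_1 = λ`, `D_k = λ·D_{k-1} - c·D_{k-2}`
(`D_k = det(F_k)` when `c = pq`). -/
noncomputable def Dseq (lam c : ℝ) : ℕ → ℝ
  | 0 => 1
  | 1 => lam
  | (k+2) => lam * Dseq lam c (k+1) - c * Dseq lam c k

/-- `E'_k`: determinant of the `k × k` tridiagonal matrix with diagonal `λ`,
first off-diagonal coupling `-√p` and remaining couplings `-√(pq)`; it satisfies
`E'_0 = 1`, `E'_1 = λ`, `E'_k = λ·D_{k-1} - p·D_{k-2}` for `k ≥ 2`. -/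
noncomputable def Ep (p q lam : ℝ) : ℕ → ℝ
  | 0 => 1
  | 1 => lam
  | (k+2) => lam * Dseq lam (p*q) (k+1) - p * Dseq lam (p*q) k

/-- The identity `(λ ∓ q)·E'_{n-1} - pq·E'_{n-2} = (λ ∓ 1)·(D_{n-1} ± p·D_{n-2})`
for all `n ≥ 3`, both sign choices, where `p + q = 1`. -/
theorem Ep_factorization
    (p q lam : ℝ) (hp : 0 < p) (hp1 : p < 1) (hq : q = 1 - p) (n : ℕ) (hn : 3 ≤ n) :
    (lam - q) * Ep p q lam (n - 1) - p*q * Ep p q lam (n - 2)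
      = (lam - 1) * (Dseq lam (p*q) (n - 1) + p * Dseq lam (p*q) (n - 2)) ∧
    (lam + q) * Ep p q lam (n - 1) - p*q * Ep p q lam (n - 2)
      = (lam + 1) * (Dseq lam (p*q) (n - 1) - p * Dseq lam (p*q) (n - 2)) := by
  obtain ⟨m, rfl⟩ : ∃ m, n = m + 3 := ⟨n - 3, by omega⟩
  have h1 : m + 3 - 1 = m + 2 := by omega
  have h2 : m + 3 - 2 = m + 1 := by omega
  rw [h1, h2]
  subst hq
  cases m with
  | zero =>
      simp only [Ep, Dseq]
      constructor <;> ring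
  | succ k =>
      simp only [Ep, Dseq]
      constructor <;> ring
end

section
/- For λ = ±1 (with p + q = 1), the determinants D_k = det(F_k) of the k×k tridiagonal matrix with diagonal λ and off-diagonal −√(pq) satisfy: E'_k := λD_{k-1} − pD_{k-2} = (±1)^k q^{k-1} for all k ≥ 1. -/
/-- At `λ = ±1` (with `p + q = 1`): `E'_k = (±1)^k · q^{k-1}` for all `k ≥ 1`. -/
theorem Ep_at_pm_one
    (p q : ℝ) (hp : 0 < p) (hp1 : p < 1) (hq : q = 1 - p) (k : ℕ) (hk : 1 ≤ k) :
    Ep p q 1 k = q^(k - 1) ∧ Ep p q (-1) k = (-1)^k * q^(k - 1) := by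
  have S : ∀ n : ℕ, Dseq 1 (p*q) (n+1) - p * Dseq 1 (p*q) n = q^(n+1) := by
    intro n
    induction n with
    | zero => simp [Dseq, hq]
    | succ m ih =>
      have : Dseq 1 (p*q) (m+2) = 1 * Dseq 1 (p*q) (m+1) - (p*q) * Dseq 1 (p*q) m := rfl
      rw [this]
      have hq' : (1:ℝ) - p = q := by rw [hq]
      calc 1 * Dseq 1 (p*q) (m+1) - p*q * Dseq 1 (p*q) m - p * Dseq 1 (p*q) (m+1)
          = q * (Dseq 1 (p*q) (m+1) - p * Dseq 1 (p*q) m) := by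
            rw [← hq']; ring
        _ = q * q^(m+1) := by rw [ih]
        _ = q^(m+2) := by ring
  have U : ∀ n : ℕ, Dseq (-1) (p*q) (n+1) + p * Dseq (-1) (p*q) n = (-1)^(n+1) * q^(n+1) := by
    intro n
    induction n with
    | zero => simp [Dseq, hq]; ring
    | succ m ih =>
      have : Dseq (-1) (p*q) (m+2)
          = (-1) * Dseq (-1) (p*q) (m+1) - (p*q) * Dseq (-1) (p*q) m := rfl
      rw [this]
      have hq' : (1:ℝ) - p = q := by rw [hq]
      calc (-1) * Dseq (-1) (p*q) (m+1) - p*q * Dseq (-1) (p*q) m + p * Dseq (-1) (p*q) (m+1)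
          = -q * (Dseq (-1) (p*q) (m+1) + p * Dseq (-1) (p*q) m) := by
            rw [← hq']; ring
        _ = -q * ((-1)^(m+1) * q^(m+1)) := by rw [ih]
        _ = (-1)^(m+2) * q^(m+2) := by ring
  match k, hk with
  | 1, _ => simp [Ep]
  | (n+2), _ =>
    constructor
    · show 1 * Dseq 1 (p*q) (n+1) - p * Dseq 1 (p*q) n = q^(n+2-1)
      rw [one_mul, S n]; norm_num
    · show (-1) * Dseq (-1) (p*q) (n+1) - p * Dseq (-1) (p*q) n = (-1)^(n+2) * q^(n+2-1)
      have := U n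
      have h2 : (-1) * Dseq (-1) (p*q) (n+1) - p * Dseq (-1) (p*q) n
          = -((Dseq (-1) (p*q) (n+1)) + p * Dseq (-1) (p*q) n) := by ring
      rw [h2, this]
      norm_num
      ring
end

section
/- Spectral mapping for the Szegedy walk: if λ is an eigenvalue of J_{2n}(p) with λ ≠ ±1 and normalized eigenvector ṽ_λ, and a_λ ∈ ℂ^{2n}⊗ℂ² is the lift a_λ = ṽ_λ(1)|1,R⟩ + Σ_{i=2}^{n} ṽ_λ(i)|i⟩⊗(√p|L⟩+√q|R⟩) + Σ_{i=n+1}^{2n-1} ṽ_λ(i)|i⟩⊗(√q|L⟩+√p|R⟩) + ṽ_λ(2n)|2n,L⟩, b_λ = S^{(2n)}a_λ, then for each choice of sign, u_± = a_λ − e^{±iφ}b_λ with cos φ = λ is an eigenvector of U^{(2n)} with eigenvalue e^{±iφ}. Moreover a_{+1} and a_{-1} (lifts of the ±1 eigenvectors of J_{2n}(p)) are eigenvectors of U^{(2n)} with eigenvalues +1 and −1 respectively. -/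
/-- Chirality amplitudes of the coin state `φ₁ = √p·L + √q·R` (index `0 = L`, `1 = R`). -/
noncomputable def phi1 (p : ℝ) : Fin 2 → ℂ := fun a =>
  if a = 0 then (Real.sqrt p : ℂ) else (Real.sqrt (1 - p) : ℂ)

/-- Chirality amplitudes of the coin state `φ₂ = √q·L + √p·R`. -/
noncomputable def phi2 (p : ℝ) : Fin 2 → ℂ := fun a =>
  if a = 0 then (Real.sqrt (1 - p) : ℂ) else (Real.sqrt p : ℂ)

/-- The coin operator `C^{(2n)}` of the Szegedy walk on the path `P_{2n}`:
`|R⟩⟨R|` at vertex `0`, `2|φ₁⟩⟨φ₁| - I` at vertices `1, …, n-1`,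
`2|φ₂⟩⟨φ₂| - I` at vertices `n, …, 2n-2`, and `|L⟩⟨L|` at vertex `2n-1`
(0-based vertices). -/
noncomputable def Cmat (p : ℝ) (n : ℕ) :
    Matrix (Fin (2*n) × Fin 2) (Fin (2*n) × Fin 2) ℂ :=
  Matrix.of fun z w =>
    if z.1 ≠ w.1 then 0
    else if z.1.1 = 0 then (if z.2 = 1 ∧ w.2 = 1 then 1 else 0)
    else if z.1.1 = 2*n - 1 then (if z.2 = 0 ∧ w.2 = 0 then 1 else 0)
    else if z.1.1 ≤ n - 1 then
      2 * phi1 p z.2 * phi1 p w.2 - (if z.2 = w.2 then 1 else 0)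
    else
      2 * phi2 p z.2 * phi2 p w.2 - (if z.2 = w.2 then 1 else 0)

/-- The shift operator `S^{(2n)}`: `|i,R⟩ ↦ |i+1,L⟩` and `|i,L⟩ ↦ |i-1,R⟩`. -/
def Smat (n : ℕ) : Matrix (Fin (2*n) × Fin 2) (Fin (2*n) × Fin 2) ℂ :=
  Matrix.of fun z w =>
    if z.2 = 0 ∧ w.2 = 1 ∧ z.1.1 = w.1.1 + 1 then 1
    else if z.2 = 1 ∧ w.2 = 0 ∧ z.1.1 + 1 = w.1.1 then 1
    else 0

/-- The time evolution operator `U^{(2n)} = S^{(2n)} C^{(2n)}` of the Szegedy walk. -/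
noncomputable def Umat (p : ℝ) (n : ℕ) :
    Matrix (Fin (2*n) × Fin 2) (Fin (2*n) × Fin 2) ℂ :=
  Smat n * Cmat p n


/-- The lift `a` of a vector `v` on the path to the walk space:
`a = v(1)|1,R⟩ + Σ_{i=2}^n v(i)|i⟩⊗(√p L + √q R)
   + Σ_{i=n+1}^{2n-1} v(i)|i⟩⊗(√q L + √p R) + v(2n)|2n,L⟩` (0-based positions). -/
noncomputable def liftv (p : ℝ) (n : ℕ) (v : Fin (2*n) → ℝ) :
    Fin (2*n) × Fin 2 → ℂ := fun z =>
  (v z.1 : ℂ) *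
    (if z.1.1 = 0 then (if z.2 = 1 then 1 else 0)
     else if z.1.1 ≤ n - 1 then (if z.2 = 0 then (Real.sqrt p : ℂ) else (Real.sqrt (1 - p) : ℂ))
     else if z.1.1 ≤ 2*n - 2 then (if z.2 = 0 then (Real.sqrt (1 - p) : ℂ) else (Real.sqrt p : ℂ))
     else (if z.2 = 0 then 1 else 0))


namespace SzAux

/-- real coupling coefficients -/
noncomputable def cfR (p : ℝ) (n : ℕ) (k : ℕ) : ℝ :=
  if k = 0 ∨ k = 2*n - 2 then Real.sqrt p
  else if k = n - 1 then 1 - p else Real.sqrt (p*(1-p))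

noncomputable def cf (p : ℝ) (n : ℕ) (k : ℕ) : ℂ := (cfR p n k : ℂ)

noncomputable def FF (p : ℝ) (n : ℕ) (k : ℕ) : ℂ :=
  if k = 0 then 1 else if k ≤ n - 1 then (Real.sqrt (1-p) : ℂ)
  else if k ≤ 2*n - 2 then (Real.sqrt p : ℂ) else 0

noncomputable def GG (p : ℝ) (n : ℕ) (k : ℕ) : ℂ :=
  if k = 0 then 0 else if k ≤ n - 1 then (Real.sqrt p : ℂ)
  else if k ≤ 2*n - 2 then (Real.sqrt (1-p) : ℂ) else 1

noncomputable def vvR (n : ℕ) (v : Fin (2*n) → ℝ) (k : ℕ) : ℝ :=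
  if h : k < 2*n then v ⟨k, h⟩ else 0

noncomputable def vv (n : ℕ) (v : Fin (2*n) → ℝ) (k : ℕ) : ℂ :=
  ((vvR n v k : ℝ) : ℂ)

lemma liftv_eq (p : ℝ) (n : ℕ) (v : Fin (2*n) → ℝ) (k : ℕ) (h : k < 2*n) (c : Fin 2) :
    liftv p n v (⟨k,h⟩, c) = vv n v k * (if c = 0 then GG p n k else FF p n k) := by
  fin_cases c <;>
    simp only [liftv, vv, vvR, FF, GG, dif_pos h] <;>
    split_ifs <;> first | rfl | omega | simp | ring

lemma S_apply0 (n : ℕ) (x : Fin (2*n) × Fin 2 → ℂ) (k : ℕ) (h : k < 2*n) :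
    (Smat n).mulVec x (⟨k,h⟩, 0) = if k = 0 then 0 else x (⟨k-1, by omega⟩, 1) := by
  unfold Matrix.mulVec dotProduct
  by_cases hk : k = 0
  · rw [if_pos hk]
    apply Finset.sum_eq_zero
    intro w _
    simp only [Smat, Matrix.of_apply]
    rw [if_neg, if_neg]
    · ring
    · rintro ⟨h1, -, -⟩; exact absurd h1 (by decide)
    · rintro ⟨-, -, h3⟩; omega
  · rw [if_neg hk]
    rw [Finset.sum_eq_single ((⟨k-1, by omega⟩ : Fin (2*n)), (1 : Fin 2))]
    · simp only [Smat, Matrix.of_apply]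
      split_ifs with h1 h2
      · exact one_mul _
      · exact absurd (by refine ⟨?_, ?_, ?_⟩ <;> first | trivial | omega) h1
      · exact absurd (by refine ⟨?_, ?_, ?_⟩ <;> first | trivial | omega) h1
    · intro w _ hw
      simp only [Smat, Matrix.of_apply]
      split_ifs with h1 h2
      · obtain ⟨-, hw2, hw3⟩ := h1
        exact absurd (Prod.ext_iff.mpr ⟨Fin.ext (show w.1.1 = k - 1 by omega), hw2⟩) hw
      · obtain ⟨hc, -, -⟩ := h2
        exact absurd hc (by decide)
      · ring
    · intro hmem; exact absurd (Finset.mem_univ _) hmem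

lemma S_apply1 (n : ℕ) (x : Fin (2*n) × Fin 2 → ℂ) (k : ℕ) (h : k < 2*n) :
    (Smat n).mulVec x (⟨k,h⟩, 1) = if h2 : k + 1 < 2*n then x (⟨k+1, h2⟩, 0) else 0 := by
  unfold Matrix.mulVec dotProduct
  by_cases hk : k + 1 < 2*n
  · rw [dif_pos hk]
    rw [Finset.sum_eq_single ((⟨k+1, hk⟩ : Fin (2*n)), (0 : Fin 2))]
    · simp only [Smat, Matrix.of_apply]
      split_ifs with h1 h2
      · obtain ⟨hc, -, -⟩ := h1
        exact absurd hc (by decide)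
      · exact one_mul _
      · exact absurd (by refine ⟨?_, ?_, ?_⟩ <;> first | trivial | omega) h2
    · intro w _ hw
      simp only [Smat, Matrix.of_apply]
      split_ifs with h1 h2
      · obtain ⟨hc, -, -⟩ := h1
        exact absurd hc (by decide)
      · obtain ⟨-, hw2, hw3⟩ := h2
        exact absurd (Prod.ext_iff.mpr ⟨Fin.ext (show w.1.1 = k + 1 by omega), hw2⟩) hw
      · ring
    · intro hmem; exact absurd (Finset.mem_univ _) hmem
  · rw [dif_neg hk]
    apply Finset.sum_eq_zero
    intro w _
    simp only [Smat, Matrix.of_apply]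
    rw [if_neg, if_neg]
    · ring
    · rintro ⟨-, -, h3⟩; omega
    · rintro ⟨h1, -, -⟩; exact absurd h1 (by decide)

lemma C_apply (p : ℝ) (n : ℕ) (x : Fin (2*n) × Fin 2 → ℂ) (i : Fin (2*n)) (c : Fin 2) :
    (Cmat p n).mulVec x (i, c)
      = Cmat p n (i,c) (i,0) * x (i,0) + Cmat p n (i,c) (i,1) * x (i,1) := by
  unfold Matrix.mulVec dotProduct
  rw [Fintype.sum_prod_type]
  rw [Finset.sum_eq_single i]
  · rw [Fin.sum_univ_two]
  · intro j _ hj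
    apply Finset.sum_eq_zero
    intro d _
    simp only [Cmat, Matrix.of_apply]
    rw [if_pos]
    · ring
    · simpa using (Ne.symm hj)
  · intro hmem; exact absurd (Finset.mem_univ _) hmem

lemma Jp_apply (p : ℝ) (n : ℕ) (i j : Fin (2*n)) :
    Jp p n i j = if i.1 + 1 = j.1 then cfR p n i.1
      else if j.1 + 1 = i.1 then cfR p n j.1 else 0 := by
  simp only [Jp, Matrix.of_apply, cfR]
  by_cases h1 : i.1 + 1 = j.1
  · have hm : min i.1 j.1 = i.1 := by omega
    rw [if_pos (Or.inl h1), if_pos h1, hm]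
  · by_cases h2 : j.1 + 1 = i.1
    · have hm : min i.1 j.1 = j.1 := by omega
      rw [if_pos (Or.inr h2), if_neg h1, if_pos h2, hm]
    · rw [if_neg (by tauto), if_neg h1, if_neg h2]

lemma J_row (p : ℝ) (n : ℕ) (v : Fin (2*n) → ℝ) (lam : ℝ)
    (hJ : (Jp p n).mulVec v = lam • v) (k : ℕ) (h : k < 2*n) :
    (if k = 0 then 0 else cfR p n (k-1) * vvR n v (k-1)) + cfR p n k * vvR n v (k+1)
      = lam * vvR n v k := by
  have hrow := congrFun hJ ⟨k, h⟩
  unfold Matrix.mulVec dotProduct at hrow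
  have hpt : ∀ j : Fin (2*n), Jp p n ⟨k,h⟩ j * v j
      = (if j.1 + 1 = k then cfR p n j.1 * v j else 0)
        + (if k + 1 = j.1 then cfR p n k * v j else 0) := by
    intro j
    rw [Jp_apply]
    simp only [Fin.val_mk] at *
    split_ifs <;> first | omega | ring
  rw [Finset.sum_congr rfl (fun j _ => hpt j), Finset.sum_add_distrib] at hrow
  have hs1 : (∑ j : Fin (2*n), if j.1 + 1 = k then cfR p n j.1 * v j else 0)
      = if k = 0 then 0 else cfR p n (k-1) * vvR n v (k-1) := by
    by_cases hk : k = 0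
    · rw [if_pos hk]
      apply Finset.sum_eq_zero
      intro j _
      rw [if_neg (by omega)]
    · rw [if_neg hk]
      rw [Finset.sum_eq_single (⟨k-1, by omega⟩ : Fin (2*n))]
      · rw [if_pos (by simp; omega)]
        unfold vvR
        rw [dif_pos (by omega)]
      · intro j _ hj
        rw [if_neg]
        intro hc
        exact hj (Fin.ext (by simp; omega))
      · intro hmem; exact absurd (Finset.mem_univ _) hmem
  have hs2 : (∑ j : Fin (2*n), if k + 1 = j.1 then cfR p n k * v j else 0)
      = cfR p n k * vvR n v (k+1) := by
    by_cases hk : k + 1 < 2*n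
    · rw [Finset.sum_eq_single (⟨k+1, hk⟩ : Fin (2*n))]
      · rw [if_pos rfl]
        unfold vvR
        rw [dif_pos hk]
      · intro j _ hj
        rw [if_neg]
        intro hc
        exact hj (Fin.ext (by simp; omega))
      · intro hmem; exact absurd (Finset.mem_univ _) hmem
    · rw [Finset.sum_eq_zero]
      · unfold vvR
        rw [dif_neg (by omega)]
        ring
      · intro j _
        rw [if_neg (by omega)]
  rw [hs1, hs2] at hrow
  rw [hrow]
  unfold vvR
  rw [dif_pos h]
  rfl

end SzAux
namespace SzAux

section
variable {p : ℝ} {n : ℕ}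

lemma key1 (hp : 0 < p) :
    (Real.sqrt p : ℂ) * (Real.sqrt (1-p) : ℂ) = (Real.sqrt (p*(1-p)) : ℂ) := by
  rw [← Complex.ofReal_mul, Real.sqrt_mul hp.le]

lemma key2 (hp1 : p < 1) :
    (Real.sqrt (1-p) : ℂ) * (Real.sqrt (1-p) : ℂ) = ((1-p : ℝ) : ℂ) := by
  rw [← Complex.ofReal_mul, Real.mul_self_sqrt (by linarith)]

lemma key3 (hp : 0 < p) :
    (Real.sqrt p : ℂ) * (Real.sqrt p : ℂ) = ((p : ℝ) : ℂ) := by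
  rw [← Complex.ofReal_mul, Real.mul_self_sqrt hp.le]

lemma FF0 : FF p n 0 = 1 := by simp [FF]

lemma GG0 : GG p n 0 = 0 := by simp [GG]

lemma FF_eq1 {k : ℕ} (h1 : 1 ≤ k) (h2 : k ≤ n-1) : FF p n k = (Real.sqrt (1-p) : ℂ) := by
  unfold FF; rw [if_neg (by omega), if_pos h2]

lemma FF_eq2 (hn : 2 ≤ n) {k : ℕ} (h1 : n-1 < k) (h2 : k ≤ 2*n-2) : FF p n k = (Real.sqrt p : ℂ) := by
  unfold FF; rw [if_neg (by omega), if_neg (by omega), if_pos h2]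

lemma GG_eq1 {k : ℕ} (h1 : 1 ≤ k) (h2 : k ≤ n-1) : GG p n k = (Real.sqrt p : ℂ) := by
  unfold GG; rw [if_neg (by omega), if_pos h2]

lemma GG_eq2 (hn : 2 ≤ n) {k : ℕ} (h1 : n-1 < k) (h2 : k ≤ 2*n-2) : GG p n k = (Real.sqrt (1-p) : ℂ) := by
  unfold GG; rw [if_neg (by omega), if_neg (by omega), if_pos h2]

lemma FF_top (hn : 2 ≤ n) : FF p n (2*n-1) = 0 := by
  unfold FF; rw [if_neg (by omega), if_neg (by omega), if_neg (by omega)]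

lemma GG_top (hn : 2 ≤ n) : GG p n (2*n-1) = 1 := by
  unfold GG; rw [if_neg (by omega), if_neg (by omega), if_neg (by omega)]

lemma cf_eq0 (hn : 2 ≤ n) : cf p n 0 = (Real.sqrt p : ℂ) := by
  unfold cf cfR; rw [if_pos (Or.inl rfl)]

lemma cf_eq_last (hn : 2 ≤ n) : cf p n (2*n-2) = (Real.sqrt p : ℂ) := by
  unfold cf cfR; rw [if_pos (Or.inr rfl)]

lemma cf_eqm (hn : 2 ≤ n) : cf p n (n-1) = ((1-p : ℝ) : ℂ) := by
  unfold cf cfR; rw [if_neg (by omega), if_pos rfl]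

lemma cf_eqr (hn : 2 ≤ n) {k : ℕ} (h1 : 1 ≤ k) (h2 : k ≠ n-1) (h3 : k < 2*n-2) :
    cf p n k = (Real.sqrt (p*(1-p)) : ℂ) := by
  unfold cf cfR; rw [if_neg (by omega), if_neg h2]

lemma vv_zero {v : Fin (2*n) → ℝ} {k : ℕ} (h : ¬ k < 2*n) : vv n v k = 0 := by
  unfold vv vvR; rw [dif_neg h]; norm_num

lemma spne (hp : 0 < p) : (Real.sqrt p : ℂ) ≠ 0 := by
  simpa using (Real.sqrt_pos.mpr hp).ne'

lemma sqne (hp1 : p < 1) : (Real.sqrt (1-p) : ℂ) ≠ 0 := by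
  simpa using (Real.sqrt_pos.mpr (by linarith : (0:ℝ) < 1-p)).ne'

lemma FFne (hp : 0 < p) (hp1 : p < 1) (hn : 2 ≤ n) {k : ℕ} (h2 : k ≤ 2*n-2) : FF p n k ≠ 0 := by
  rcases Nat.eq_zero_or_pos k with hk | hk
  · subst hk; rw [FF0]; exact one_ne_zero
  · by_cases hk2 : k ≤ n-1
    · rw [FF_eq1 hk hk2]; exact sqne hp1
    · rw [FF_eq2 hn (by omega) h2]; exact spne hp

lemma GGne (hp : 0 < p) (hp1 : p < 1) (hn : 2 ≤ n) {k : ℕ} (h1 : 1 ≤ k) (h2 : k ≤ 2*n-2) :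
    GG p n k ≠ 0 := by
  by_cases hk2 : k ≤ n-1
  · rw [GG_eq1 h1 hk2]; exact spne hp
  · rw [GG_eq2 hn (by omega) h2]; exact sqne hp1

lemma nrm (hp : 0 < p) (hp1 : p < 1) (hn : 2 ≤ n) {k : ℕ} (h1 : 1 ≤ k) (h2 : k ≤ 2*n-2) :
    GG p n k * GG p n k + FF p n k * FF p n k = 1 := by
  by_cases hk2 : k ≤ n-1
  · rw [GG_eq1 h1 hk2, FF_eq1 h1 hk2, key2 hp1, key3 hp, ← Complex.ofReal_add]
    norm_num
  · rw [GG_eq2 hn (by omega) h2, FF_eq2 hn (by omega) h2, key2 hp1, key3 hp,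
      ← Complex.ofReal_add]
    norm_num

lemma idL (hp : 0 < p) (hp1 : p < 1) (hn : 2 ≤ n) {k : ℕ} (h1 : 1 ≤ k) (h2 : k ≤ 2*n-2) :
    GG p n k * FF p n (k-1) = cf p n (k-1) := by
  rcases Nat.lt_or_ge k 2 with hk1 | hk1
  · have hk : k = 1 := by omega
    subst hk
    rw [GG_eq1 le_rfl (by omega), FF0, cf_eq0 hn, mul_one]
  · by_cases hk2 : k ≤ n-1
    · rw [GG_eq1 h1 hk2, FF_eq1 (by omega) (by omega), key1 hp,
        cf_eqr hn (by omega) (by omega) (by omega)]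
    · by_cases hk3 : k = n
      · subst hk3
        rw [GG_eq2 hn (by omega) h2, FF_eq1 (by omega) (le_refl _), key2 hp1, cf_eqm hn]
      · rw [GG_eq2 hn (by omega) h2, FF_eq2 hn (by omega) (by omega),
          (mul_comm _ _).trans (key1 hp), cf_eqr hn (by omega) (by omega) (by omega)]

lemma idR (hp : 0 < p) (hp1 : p < 1) (hn : 2 ≤ n) {k : ℕ} (h1 : 1 ≤ k) (h2 : k ≤ 2*n-2) :
    FF p n k * GG p n (k+1) = cf p n k := by
  by_cases hk4 : k = 2*n-2
  · have e : k + 1 = 2*n-1 := by omega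
    rw [e, hk4, FF_eq2 hn (by omega) le_rfl, GG_top hn, mul_one, cf_eq_last hn]
  · by_cases hk2 : k ≤ n-1
    · by_cases hk3 : k = n-1
      · subst hk3
        rw [FF_eq1 h1 le_rfl, GG_eq2 hn (by omega) (by omega), key2 hp1, cf_eqm hn]
      · rw [FF_eq1 h1 hk2, GG_eq1 (by omega) (by omega),
          (mul_comm _ _).trans (key1 hp), cf_eqr hn h1 hk3 (by omega)]
    · rw [FF_eq2 hn (by omega) h2, GG_eq2 hn (by omega) (by omega), key1 hp,
        cf_eqr hn h1 (by omega) (by omega)]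

end
end SzAux
namespace SzAux

section
variable {p : ℝ} {n : ℕ}

lemma fin2 (c : Fin 2) : c = 0 ∨ c = 1 := by omega

lemma b0 (p : ℝ) (n : ℕ) (v : Fin (2*n) → ℝ) (k : ℕ) (h : k < 2*n) :
    (Smat n).mulVec (liftv p n v) (⟨k,h⟩, 0)
      = if k = 0 then 0 else vv n v (k-1) * FF p n (k-1) := by
  rw [S_apply0]
  split_ifs with hk
  · rfl
  · rw [liftv_eq p n v (k-1) (by omega), if_neg (by decide)]

lemma b1 (p : ℝ) (n : ℕ) (v : Fin (2*n) → ℝ) (k : ℕ) (h : k < 2*n) :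
    (Smat n).mulVec (liftv p n v) (⟨k,h⟩, 1) = vv n v (k+1) * GG p n (k+1) := by
  rw [S_apply1]
  split_ifs with hk
  · rw [liftv_eq p n v (k+1) hk, if_pos rfl]
  · rw [vv_zero (by omega), zero_mul]

lemma C_left (hn : 2 ≤ n) (x : Fin (2*n) × Fin 2 → ℂ) (h0 : 0 < 2*n) (c : Fin 2) :
    (Cmat p n).mulVec x (⟨0,h0⟩, c) = if c = 1 then x (⟨0,h0⟩,1) else 0 := by
  rw [C_apply]
  rcases fin2 c with rfl | rfl <;> simp [Cmat]

lemma C_right (hn : 2 ≤ n) (x : Fin (2*n) × Fin 2 → ℂ) (ht : 2*n-1 < 2*n) (c : Fin 2) :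
    (Cmat p n).mulVec x (⟨2*n-1,ht⟩, c) = if c = 0 then x (⟨2*n-1,ht⟩,0) else 0 := by
  rw [C_apply]
  rcases fin2 c with rfl | rfl <;> simp [Cmat] <;> omega

lemma Cmat_mid (hn : 2 ≤ n) {k : ℕ} (hk : k < 2*n) (h1 : 1 ≤ k) (h2 : k ≤ 2*n-2)
    (c d : Fin 2) :
    Cmat p n (⟨k,hk⟩,c) (⟨k,hk⟩,d)
      = 2 * (if c = 0 then GG p n k else FF p n k) * (if d = 0 then GG p n k else FF p n k)
        - (if c = d then 1 else 0) := by
  simp only [Cmat, Matrix.of_apply]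
  rw [if_neg (by simp), if_neg (by omega), if_neg (by omega)]
  by_cases hr : k ≤ n-1
  · rw [if_pos (by simpa using hr)]
    rcases fin2 c with rfl | rfl <;> rcases fin2 d with rfl | rfl <;>
      simp [phi1, GG_eq1 h1 hr, FF_eq1 h1 hr]
  · rw [if_neg (by simpa using hr)]
    rcases fin2 c with rfl | rfl <;> rcases fin2 d with rfl | rfl <;>
      simp [phi2, GG_eq2 hn (by omega) h2, FF_eq2 hn (by omega) h2]

lemma C_mid (hn : 2 ≤ n) (x : Fin (2*n) × Fin 2 → ℂ) {k : ℕ} (hk : k < 2*n)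
    (h1 : 1 ≤ k) (h2 : k ≤ 2*n-2) (c : Fin 2) :
    (Cmat p n).mulVec x (⟨k,hk⟩, c)
      = 2 * (if c = 0 then GG p n k else FF p n k) *
          (GG p n k * x (⟨k,hk⟩,0) + FF p n k * x (⟨k,hk⟩,1)) - x (⟨k,hk⟩,c) := by
  rw [C_apply, Cmat_mid hn hk h1 h2, Cmat_mid hn hk h1 h2]
  rcases fin2 c with rfl | rfl <;> norm_num <;> ring

lemma Ca (hp : 0 < p) (hp1 : p < 1) (hn : 2 ≤ n) (v : Fin (2*n) → ℝ) :
    (Cmat p n).mulVec (liftv p n v) = liftv p n v := by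
  funext z
  obtain ⟨⟨k, hk⟩, c⟩ := z
  by_cases hk0 : k = 0
  · subst hk0
    rw [C_left hn, liftv_eq p n v 0 hk c]
    rcases fin2 c with rfl | rfl
    · simp [GG0]
    · rw [liftv_eq p n v 0 hk]
      simp
  · by_cases hkt : k = 2*n-1
    · subst hkt
      rw [C_right hn, liftv_eq p n v _ hk c]
      rcases fin2 c with rfl | rfl
      · rw [liftv_eq p n v _ hk]
        simp
      · simp [FF_top hn]
    · rw [C_mid hn _ hk (by omega) (by omega),
        liftv_eq p n v k hk, liftv_eq p n v k hk, liftv_eq p n v k hk]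
      have hnm := nrm hp hp1 hn (k := k) (by omega) (by omega)
      rcases fin2 c with rfl | rfl
      · norm_num
        linear_combination (2 * GG p n k * vv n v k) * hnm
      · norm_num
        linear_combination (2 * FF p n k * vv n v k) * hnm

lemma J_rowC (v : Fin (2*n) → ℝ) (lam : ℝ)
    (hJ : (Jp p n).mulVec v = lam • v) (k : ℕ) (h : k < 2*n) :
    (if k = 0 then 0 else cf p n (k-1) * vv n v (k-1)) + cf p n k * vv n v (k+1)
      = ((lam:ℝ):ℂ) * vv n v k := by
  have h' := J_row p n v lam hJ k h
  by_cases hk : k = 0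
  · rw [if_pos hk] at h' ⊢
    unfold cf vv
    exact_mod_cast congrArg Complex.ofReal h'
  · rw [if_neg hk] at h' ⊢
    unfold cf vv
    exact_mod_cast congrArg Complex.ofReal h'

end
end SzAux
namespace SzAux

section
variable {p : ℝ} {n : ℕ}

lemma Cb (hp : 0 < p) (hp1 : p < 1) (hn : 2 ≤ n) (v : Fin (2*n) → ℝ) (lam : ℝ)
    (hJ : (Jp p n).mulVec v = lam • v) :
    (Cmat p n).mulVec ((Smat n).mulVec (liftv p n v))
      = ((2*lam : ℝ):ℂ) • liftv p n v - (Smat n).mulVec (liftv p n v) := by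
  funext z
  obtain ⟨⟨k, hk⟩, c⟩ := z
  simp only [Pi.sub_apply, Pi.smul_apply, smul_eq_mul]
  by_cases hk0 : k = 0
  · subst hk0
    rw [C_left hn]
    rcases fin2 c with rfl | rfl
    · rw [if_neg (by decide), b0 p n v 0 hk, if_pos rfl, liftv_eq p n v 0 hk, if_pos rfl, GG0]
      ring
    · rw [if_pos rfl, b1 p n v 0 hk, liftv_eq p n v 0 hk, if_neg (by decide), FF0]
      have row := J_rowC v lam hJ 0 hk
      rw [if_pos rfl] at row
      have hGF := idL hp hp1 hn (n := n) (k := 1) (by omega) (by omega)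
      rw [show (1:ℕ) - 1 = 0 from rfl, FF0, mul_one] at hGF
      push_cast
      linear_combination 2 * row + 2 * vv n v (0+1) * hGF
  · by_cases hkt : k = 2*n-1
    · subst hkt
      rw [C_right hn]
      rcases fin2 c with rfl | rfl
      · rw [if_pos rfl, b0 p n v _ hk, if_neg (by omega), liftv_eq p n v _ hk, if_pos rfl,
          GG_top hn]
        have row := J_rowC v lam hJ (2*n-1) hk
        rw [if_neg (by omega)] at row
        rw [vv_zero (n := n) (k := 2*n-1+1) (by omega), mul_zero, add_zero] at row
        have hGF := idR hp hp1 hn (n := n) (k := 2*n-2) (by omega) le_rfl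
        rw [show 2*n-2+1 = 2*n-1 from by omega, GG_top hn, mul_one] at hGF
        rw [show 2*n-1-1 = 2*n-2 from by omega] at row ⊢
        push_cast
        linear_combination 2 * row + 2 * vv n v (2*n-2) * hGF
      · rw [if_neg (by decide), b1 p n v _ hk, vv_zero (by omega), zero_mul,
          liftv_eq p n v _ hk, if_neg (by decide), FF_top hn]
        ring
    · have h1 : 1 ≤ k := by omega
      have h2 : k ≤ 2*n-2 := by omega
      rw [C_mid hn _ hk h1 h2, b0 p n v k hk, if_neg hk0, b1 p n v k hk,
        liftv_eq p n v k hk]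
      have row := J_rowC v lam hJ k hk
      rw [if_neg hk0] at row
      have kL := idL hp hp1 hn h1 h2
      have kR := idR hp hp1 hn h1 h2
      have key : GG p n k * (vv n v (k-1) * FF p n (k-1))
          + FF p n k * (vv n v (k+1) * GG p n (k+1)) = (lam:ℂ) * vv n v k := by
        linear_combination vv n v (k-1) * kL + vv n v (k+1) * kR + row
      push_cast
      rcases fin2 c with rfl | rfl
      · norm_num
        linear_combination 2 * GG p n k * key
      · norm_num
        linear_combination 2 * FF p n k * key

end
end SzAux
namespace SzAux

section
variable {p : ℝ} {n : ℕ}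

lemma SS (hn : 2 ≤ n) (x : Fin (2*n) × Fin 2 → ℂ)
    (hx0 : x (⟨0, by omega⟩, 0) = 0) (hx1 : x (⟨2*n-1, by omega⟩, 1) = 0) :
    (Smat n).mulVec ((Smat n).mulVec x) = x := by
  funext z
  obtain ⟨⟨k, hk⟩, c⟩ := z
  rcases fin2 c with rfl | rfl
  · rw [S_apply0]
    split_ifs with h0
    · subst h0
      exact hx0.symm
    · rw [S_apply1, dif_pos (show k-1+1 < 2*n by omega)]
      have e : (⟨k-1+1, show k-1+1 < 2*n by omega⟩ : Fin (2*n)) = ⟨k, hk⟩ :=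
        Fin.ext (show k-1+1 = k by omega)
      rw [e]
  · rw [S_apply1]
    split_ifs with h0
    · rw [S_apply0, if_neg (by omega)]
      have e : (⟨k+1-1, show k+1-1 < 2*n by omega⟩ : Fin (2*n)) = ⟨k, hk⟩ :=
        Fin.ext (show k+1-1 = k by omega)
      rw [e]
    · have e : (⟨k, hk⟩ : Fin (2*n)) = ⟨2*n-1, by omega⟩ := Fin.ext (show k = 2*n-1 by omega)
      rw [e, hx1]

lemma a_left0 (hn : 2 ≤ n) (v : Fin (2*n) → ℝ) (h0 : 0 < 2*n) :
    liftv p n v (⟨0, h0⟩, 0) = 0 := by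
  rw [liftv_eq p n v 0 h0, if_pos rfl, GG0, mul_zero]

lemma a_right1 (hn : 2 ≤ n) (v : Fin (2*n) → ℝ) (ht : 2*n-1 < 2*n) :
    liftv p n v (⟨2*n-1, ht⟩, 1) = 0 := by
  rw [liftv_eq p n v _ ht, if_neg (by decide), FF_top hn, mul_zero]

lemma Sb (hn : 2 ≤ n) (v : Fin (2*n) → ℝ) :
    (Smat n).mulVec ((Smat n).mulVec (liftv p n v)) = liftv p n v :=
  SS hn _ (a_left0 hn v (by omega)) (a_right1 hn v (by omega))

lemma liftv_ne (hp : 0 < p) (hp1 : p < 1) (hn : 2 ≤ n) (v : Fin (2*n) → ℝ) (hv : v ≠ 0) :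
    liftv p n v ≠ 0 := by
  obtain ⟨i, hi⟩ := Function.ne_iff.mp hv
  obtain ⟨k, hk⟩ := i
  have hvk : vv n v k ≠ 0 := by
    unfold vv vvR
    rw [dif_pos hk]
    exact Complex.ofReal_ne_zero.mpr (by simpa using hi)
  intro hcontra
  by_cases h0 : k = 0
  · subst h0
    have h := congrFun hcontra (⟨0, hk⟩, 1)
    rw [liftv_eq p n v 0 hk, if_neg (by decide), FF0, mul_one] at h
    exact hvk h
  · by_cases hT : k = 2*n-1
    · subst hT
      have h := congrFun hcontra (⟨2*n-1, hk⟩, 0)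
      rw [liftv_eq p n v _ hk, if_pos rfl, GG_top hn, mul_one] at h
      exact hvk (by simpa using h)
    · have h := congrFun hcontra (⟨k, hk⟩, 0)
      rw [liftv_eq p n v k hk, if_pos rfl] at h
      have := mul_ne_zero hvk (GGne hp hp1 hn (k := k) (by omega) (by omega))
      exact this h

lemma eps_sq {ε : ℝ} (hε : ε = 1 ∨ ε = -1) : ((ε:ℝ):ℂ) * ((ε:ℝ):ℂ) = 1 := by
  rcases hε with rfl | rfl <;> norm_num

lemma chain (hp : 0 < p) (hp1 : p < 1) (hn : 2 ≤ n) (v : Fin (2*n) → ℝ) (ε : ℝ)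
    (hε : ε = 1 ∨ ε = -1) (hJ : (Jp p n).mulVec v = ε • v) :
    ∀ k, k + 1 < 2*n →
      FF p n k * vv n v k = (ε:ℂ) * (GG p n (k+1) * vv n v (k+1)) := by
  have hε2 := eps_sq hε
  intro k
  induction k with
  | zero =>
    intro h
    have row := J_rowC v ε hJ 0 (by omega)
    rw [if_pos rfl] at row
    have hGF := idL hp hp1 hn (n := n) (k := 1) (by omega) (by omega)
    rw [show (1:ℕ) - 1 = 0 from rfl, FF0, mul_one] at hGF
    rw [FF0]
    linear_combination (-(ε:ℂ) * vv n v (0+1)) * hGF + (-(ε:ℂ)) * row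
      + (-(vv n v 0)) * hε2
  | succ m ih =>
    intro h
    have IH := ih (by omega)
    have h1 : 1 ≤ m + 1 := by omega
    have h2 : m + 1 ≤ 2*n - 2 := by omega
    have row := J_rowC v ε hJ (m+1) (by omega)
    rw [if_neg (by omega), show m+1-1 = m from rfl] at row
    have kL := idL hp hp1 hn h1 h2
    rw [show m+1-1 = m from rfl] at kL
    have kR := idR hp hp1 hn h1 h2
    have nr := nrm hp hp1 hn h1 h2
    have hGne := GGne hp hp1 hn h1 h2
    have hFne := FFne hp hp1 hn (n := n) (k := m+1) h2
    apply mul_left_cancel₀ (mul_ne_zero hGne hFne)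
    linear_combination (GG p n (m+1) * vv n v (m+1)) * nr
      + (GG p n (m+1) ^ 3 * vv n v (m+1) - GG p n (m+1) * vv n v (m+1)) * hε2
      + (-(ε:ℂ) * GG p n (m+1)) * row
      + (-(ε:ℂ) * GG p n (m+1) * vv n v (m+1+1)) * kR
      + (-(ε:ℂ) * GG p n (m+1) * vv n v m) * kL
      + ((ε:ℂ) * GG p n (m+1) ^ 2) * IH

lemma Sa_eps (hp : 0 < p) (hp1 : p < 1) (hn : 2 ≤ n) (v : Fin (2*n) → ℝ) (ε : ℝ)
    (hε : ε = 1 ∨ ε = -1) (hJ : (Jp p n).mulVec v = ε • v) :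
    (Smat n).mulVec (liftv p n v) = ((ε:ℝ):ℂ) • liftv p n v := by
  have hε2 := eps_sq hε
  funext z
  obtain ⟨⟨k, hk⟩, c⟩ := z
  simp only [Pi.smul_apply, smul_eq_mul]
  rcases fin2 c with rfl | rfl
  · rw [b0 p n v k hk, liftv_eq p n v k hk, if_pos rfl]
    split_ifs with h0
    · subst h0
      rw [GG0]
      ring
    · have hc := chain hp hp1 hn v ε hε hJ (k-1) (by omega)
      rw [show k-1+1 = k from by omega] at hc
      linear_combination hc
  · rw [b1 p n v k hk, liftv_eq p n v k hk, if_neg (by decide)]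
    by_cases hT : k + 1 < 2*n
    · have hc := chain hp hp1 hn v ε hε hJ k hT
      linear_combination (-(ε:ℂ)) * hc + (-(GG p n (k+1) * vv n v (k+1))) * hε2
    · rw [vv_zero (by omega), show k = 2*n-1 from by omega, FF_top hn]
      ring

end
end SzAux

/-- Spectral mapping for the Szegedy walk: if `λ ≠ ±1` is an eigenvalue of
`J_{2n}(p)` with normalized eigenvector `ṽ`, `a` its lift, `b = S a`, and
`cos φ = λ`, then `u_± = a - e^{±iφ} b` is an eigenvector of `U^{(2n)}` with
eigenvalue `e^{±iφ}`; moreover the lifts of `±1`-eigenvectors of `J_{2n}(p)` are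
eigenvectors of `U^{(2n)}` with eigenvalues `±1`. -/
theorem szegedy_spectral_mapping
    (p : ℝ) (hp : 0 < p) (hp1 : p < 1) (n : ℕ) (hn : 2 ≤ n) :
    (∀ (lam φ : ℝ) (v : Fin (2*n) → ℝ), v ≠ 0 → (∑ i, (v i)^2 = 1) →
      (Jp p n).mulVec v = lam • v → lam ≠ 1 → lam ≠ -1 → Real.cos φ = lam →
      ∀ s : ℝ, s = 1 ∨ s = -1 →
        (Umat p n).mulVec
            (liftv p n v - Complex.exp ((s*φ : ℝ) * Complex.I) • (Smat n).mulVec (liftv p n v))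
          = Complex.exp ((s*φ : ℝ) * Complex.I) •
            (liftv p n v - Complex.exp ((s*φ : ℝ) * Complex.I) • (Smat n).mulVec (liftv p n v)) ∧
        liftv p n v - Complex.exp ((s*φ : ℝ) * Complex.I) • (Smat n).mulVec (liftv p n v) ≠ 0) ∧
    (∀ v : Fin (2*n) → ℝ, v ≠ 0 → (Jp p n).mulVec v = v →
      (Umat p n).mulVec (liftv p n v) = liftv p n v ∧ liftv p n v ≠ 0) ∧
    (∀ v : Fin (2*n) → ℝ, v ≠ 0 → (Jp p n).mulVec v = -v →
      (Umat p n).mulVec (liftv p n v) = -(liftv p n v) ∧ liftv p n v ≠ 0) := by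
  refine ⟨?_, ?_, ?_⟩
  · intro lam φ v hv0 _hnorm hJ hl1 hlm1 hcos s hs
    set a := liftv p n v with ha
    set b := (Smat n).mulVec a with hb
    set e := Complex.exp ((s*φ : ℝ) * Complex.I) with he
    have hCa := SzAux.Ca hp hp1 hn v
    have hCb := SzAux.Cb hp hp1 hn v lam hJ
    have hSb : (Smat n).mulVec b = a := SzAux.Sb hn v
    have hcosθ : Real.cos (s*φ) = lam := by
      rcases hs with rfl | rfl
      · simpa using hcos
      · simpa using hcos
    have hkey : e * e + 1 = 2 * (lam:ℂ) * e := by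
      have h1 : e = (Real.cos (s*φ) : ℂ) + (Real.sin (s*φ) : ℂ) * Complex.I := by
        rw [he, Complex.exp_mul_I, Complex.ofReal_cos, Complex.ofReal_sin]
      have h2 : (Real.cos (s*φ) : ℂ)^2 + (Real.sin (s*φ) : ℂ)^2 = 1 := by
        exact_mod_cast congrArg Complex.ofReal (Real.cos_sq_add_sin_sq (s*φ))
      have hc : ((lam:ℝ):ℂ) = ((Real.cos (s*φ) : ℝ):ℂ) := by
        exact_mod_cast congrArg Complex.ofReal hcosθ.symm
      rw [h1, hc]
      have hI := Complex.I_sq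
      linear_combination ((Real.sin (s*φ) : ℂ))^2 * hI - h2
    have hU : (Umat p n).mulVec (a - e • b) = e • (a - e • b) := by
      rw [Umat, ← Matrix.mulVec_mulVec]
      rw [Matrix.mulVec_sub, Matrix.mulVec_smul, hCa, hCb, ← hb]
      rw [Matrix.mulVec_sub, Matrix.mulVec_smul, Matrix.mulVec_sub, Matrix.mulVec_smul,
        hSb, ← hb]
      funext z
      simp only [Pi.sub_apply, Pi.smul_apply, smul_eq_mul]
      push_cast
      linear_combination (b z) * hkey
    refine ⟨hU, ?_⟩
    intro hzero
    have hane : a ≠ 0 := SzAux.liftv_ne hp hp1 hn v hv0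
    have hbne : b ≠ 0 := by
      intro hb0
      apply hane
      rw [← hSb, hb0, Matrix.mulVec_zero]
    have hab : a = e • b := by rwa [sub_eq_zero] at hzero
    have h3 : b = e • a := by rw [hb, hab, Matrix.mulVec_smul, hSb, hab]
    rw [hab] at h3
    obtain ⟨z, hz⟩ := Function.ne_iff.mp hbne
    have hz2 := congrFun h3 z
    simp only [Pi.smul_apply, smul_eq_mul] at hz2
    have he2 : e * e = 1 := by
      have hfac : (e * e - 1) * b z = 0 := by linear_combination (-1 : ℂ) * hz2
      rcases mul_eq_zero.mp hfac with h | h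
      · exact sub_eq_zero.mp h
      · exact absurd h hz
    have hexp1 : Complex.exp (((s*φ:ℝ):ℂ) * Complex.I + ((s*φ:ℝ):ℂ) * Complex.I) = 1 := by
      rw [Complex.exp_add, ← he]
      exact he2
    obtain ⟨m, hm⟩ := Complex.exp_eq_one_iff.mp hexp1
    have h4 : ((s*φ:ℝ):ℂ) = (m:ℂ) * (Real.pi:ℂ) := by
      have h5 : (((s*φ):ℝ):ℂ) * Complex.I * 2 = ((m:ℂ) * (Real.pi:ℂ)) * Complex.I * 2 := by
        linear_combination hm
      have h6 := mul_right_cancel₀ (two_ne_zero) h5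
      exact mul_right_cancel₀ Complex.I_ne_zero h6
    have hθ : s * φ = (m:ℝ) * Real.pi := by exact_mod_cast h4
    have hsin : Real.sin (s*φ) = 0 := by rw [hθ]; exact Real.sin_int_mul_pi m
    have hcos2 : lam * lam = 1 := by
      have hh := Real.sin_sq_add_cos_sq (s*φ)
      rw [hsin, hcosθ] at hh
      nlinarith [hh]
    rcases mul_self_eq_one_iff.mp hcos2 with h | h
    · exact hl1 h
    · exact hlm1 h
  · intro v hv0 hJ
    have hJ' : (Jp p n).mulVec v = (1:ℝ) • v := by simpa using hJ
    have hCa := SzAux.Ca hp hp1 hn v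
    have hS := SzAux.Sa_eps hp hp1 hn v 1 (Or.inl rfl) hJ'
    refine ⟨?_, SzAux.liftv_ne hp hp1 hn v hv0⟩
    rw [Umat, ← Matrix.mulVec_mulVec, hCa, hS]
    norm_num
  · intro v hv0 hJ
    have hJ' : (Jp p n).mulVec v = (-1:ℝ) • v := by simpa using hJ
    have hCa := SzAux.Ca hp hp1 hn v
    have hS := SzAux.Sa_eps hp hp1 hn v (-1) (Or.inr rfl) hJ'
    refine ⟨?_, SzAux.liftv_ne hp hp1 hn v hv0⟩
    rw [Umat, ← Matrix.mulVec_mulVec, hCa, hS]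
    norm_num
end
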